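/- arXiv:2209.13862 — 6 statements merged into one kernel-verified Lean document; each statement's English description precedes it below -/
import Mathlib

section
/- Let P_{XY} be a joint pmf on finite alphabets 𝒳×𝒴 with P_X(x)>0 for every x∈𝒳, and let g:[0,1]→[0,∞) be any gain function. For every finite alphabet 𝒰 and every channel P_{U|X} from 𝒳 to 𝒰 (defining the Markov chain U−X−Y via P_{UXY}(u,x,y)=P_{U|X}(u|x)P_{XY}(x,y)), one has sup over families of pmfs (P̂_y)_{y∈𝒴} on 𝒰 of Σ_{u,y} P_{UY}(u,y)·g(P̂_y(u)) ≤ (Σ_{y∈𝒴} max_{x∈𝒳} P_{Y|X}(y|x)) · (sup over pmfs P̂ on 𝒰 of Σ_u P_U(u)·g(P̂(u))). Consequently the maximal g-leakage L_g^max(X→Y) is at most log Σ_{y∈𝒴} max_{x∈𝒳} P_{Y|X}(y|x). -/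
open Finset

/-- A probability mass function on a finite type. -/
def IsPMF {α : Type*} [Fintype α] (p : α → ℝ) : Prop :=
  (∀ a, 0 ≤ p a) ∧ ∑ a, p a = 1

/-- A channel (row-stochastic kernel). -/
def IsChannel {X U : Type*} [Fintype U] (K : X → U → ℝ) : Prop :=
  ∀ x, IsPMF (K x)

/-- For any nonnegative gain function `g`, any finite alphabet `U` and any
channel `K = P_{U|X}`, the supremum over families of guessing pmfs of the "posterior" expected
gain is at most `(∑_y max_x P_{Y|X}(y|x))` times the supremum over guessing pmfs of the "prior"
expected gain (phrased via upper-bound transfer, which is exactly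
`sup Num ≤ (∑_y max_x P_{Y|X}(y|x)) · sup Den` in the extended sense); consequently the maximal
`g`-leakage is at most `log ∑_y max_x P_{Y|X}(y|x)`. -/
theorem stmt0 {X Y U : Type} [Fintype X] [Fintype Y] [Fintype U] [Nonempty X]
    (P : X → Y → ℝ) (hP : IsPMF (fun z : X × Y => P z.1 z.2))
    (hPX : ∀ x, 0 < ∑ y, P x y)
    (g : ℝ → ℝ) (hg : ∀ t ∈ Set.Icc (0:ℝ) 1, 0 ≤ g t)
    (K : X → U → ℝ) (hK : IsChannel K) :
    (∀ c : ℝ,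
      (∀ Ph : U → ℝ, IsPMF Ph →
        ∑ u, (∑ x, (∑ y, P x y) * K x u) * g (Ph u) ≤ c) →
      ∀ Ph : Y → U → ℝ, (∀ y, IsPMF (Ph y)) →
        ∑ y, ∑ u, (∑ x, K x u * P x y) * g (Ph y u) ≤
          (∑ y, Finset.univ.sup' Finset.univ_nonempty
            (fun x => P x y / ∑ y', P x y')) * c)
    ∧
    Real.log
        (sSup {w : ℝ | ∃ Ph : Y → U → ℝ, (∀ y, IsPMF (Ph y)) ∧
            w = ∑ y, ∑ u, (∑ x, K x u * P x y) * g (Ph y u)} /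
          sSup {v : ℝ | ∃ Ph : U → ℝ, IsPMF Ph ∧
            v = ∑ u, (∑ x, (∑ y, P x y) * K x u) * g (Ph u)})
      ≤ Real.log (∑ y, Finset.univ.sup' Finset.univ_nonempty
          (fun x => P x y / ∑ y', P x y')) := by
  classical
  obtain ⟨x0⟩ := ‹Nonempty X›
  have hPnn : ∀ x y, 0 ≤ P x y := fun x y => hP.1 (x, y)
  have hMle : ∀ (y : Y) (x : X), P x y / ∑ y', P x y' ≤
      Finset.univ.sup' Finset.univ_nonempty (fun x => P x y / ∑ y', P x y') :=
    fun y x => Finset.le_sup' (f := fun x => P x y / ∑ y', P x y') (Finset.mem_univ x)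
  have hMnn : ∀ y : Y, 0 ≤
      Finset.univ.sup' Finset.univ_nonempty (fun x => P x y / ∑ y', P x y') :=
    fun y => le_trans (div_nonneg (hPnn x0 y) (hPX x0).le) (hMle y x0)
  have hS1 : (1:ℝ) ≤ ∑ y, Finset.univ.sup' Finset.univ_nonempty
      (fun x => P x y / ∑ y', P x y') := by
    have h := Finset.sum_le_sum (s := Finset.univ)
      (f := fun y => P x0 y / ∑ y', P x0 y')
      (g := fun y => Finset.univ.sup' Finset.univ_nonempty
        (fun x => P x y / ∑ y', P x y')) (fun y _ => hMle y x0)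
    rwa [← Finset.sum_div, div_self (hPX x0).ne'] at h
  have hgnn : ∀ (p : U → ℝ), IsPMF p → ∀ u, 0 ≤ g (p u) := by
    intro p hp u
    refine hg _ ⟨hp.1 u, ?_⟩
    calc p u ≤ ∑ u', p u' :=
          Finset.single_le_sum (fun a _ => hp.1 a) (Finset.mem_univ u)
      _ = 1 := hp.2
  have key : ∀ c : ℝ,
      (∀ Ph : U → ℝ, IsPMF Ph →
        ∑ u, (∑ x, (∑ y, P x y) * K x u) * g (Ph u) ≤ c) →
      ∀ Ph : Y → U → ℝ, (∀ y, IsPMF (Ph y)) →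
        ∑ y, ∑ u, (∑ x, K x u * P x y) * g (Ph y u) ≤
          (∑ y, Finset.univ.sup' Finset.univ_nonempty
            (fun x => P x y / ∑ y', P x y')) * c := by
    intro c hc Ph hPh
    have step : ∀ y, ∑ u, (∑ x, K x u * P x y) * g (Ph y u) ≤
        (Finset.univ.sup' Finset.univ_nonempty
          (fun x => P x y / ∑ y', P x y')) * c := by
      intro y
      have h1 : ∑ u, (∑ x, K x u * P x y) * g (Ph y u) ≤
          (Finset.univ.sup' Finset.univ_nonempty
            (fun x => P x y / ∑ y', P x y')) *
          ∑ u, (∑ x, (∑ y', P x y') * K x u) * g (Ph y u) := by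
        rw [Finset.mul_sum]
        refine Finset.sum_le_sum fun u _ => ?_
        rw [← mul_assoc]
        refine mul_le_mul_of_nonneg_right ?_ (hgnn _ (hPh y) u)
        rw [Finset.mul_sum]
        refine Finset.sum_le_sum fun x _ => ?_
        have hx : K x u * P x y = (P x y / ∑ y', P x y') * ((∑ y', P x y') * K x u) := by
          have hQ := (hPX x).ne'
          field_simp
        rw [hx]
        exact mul_le_mul_of_nonneg_right (hMle y x)
          (mul_nonneg (hPX x).le ((hK x).1 u))
      have h2 : ∑ u, (∑ x, (∑ y', P x y') * K x u) * g (Ph y u) ≤ c :=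
        hc (Ph y) (hPh y)
      calc ∑ u, (∑ x, K x u * P x y) * g (Ph y u)
          ≤ (Finset.univ.sup' Finset.univ_nonempty
              (fun x => P x y / ∑ y', P x y')) *
            ∑ u, (∑ x, (∑ y', P x y') * K x u) * g (Ph y u) := h1
        _ ≤ (Finset.univ.sup' Finset.univ_nonempty
              (fun x => P x y / ∑ y', P x y')) * c :=
            mul_le_mul_of_nonneg_left h2 (hMnn y)
    calc ∑ y, ∑ u, (∑ x, K x u * P x y) * g (Ph y u)
        ≤ ∑ y, (Finset.univ.sup' Finset.univ_nonempty
            (fun x => P x y / ∑ y', P x y')) * c :=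
          Finset.sum_le_sum fun y _ => step y
      _ = (∑ y, Finset.univ.sup' Finset.univ_nonempty
            (fun x => P x y / ∑ y', P x y')) * c := by
          rw [Finset.sum_mul]
  refine ⟨key, ?_⟩
  set Dset : Set ℝ := {v : ℝ | ∃ Ph : U → ℝ, IsPMF Ph ∧
      v = ∑ u, (∑ x, (∑ y, P x y) * K x u) * g (Ph u)} with hDset
  set Nset : Set ℝ := {w : ℝ | ∃ Ph : Y → U → ℝ, (∀ y, IsPMF (Ph y)) ∧
      w = ∑ y, ∑ u, (∑ x, K x u * P x y) * g (Ph y u)} with hNset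
  have hDnn : 0 ≤ sSup Dset := by
    apply Real.sSup_nonneg
    rintro v ⟨Ph, hPh, rfl⟩
    exact Finset.sum_nonneg fun u _ => mul_nonneg
      (Finset.sum_nonneg fun x _ => mul_nonneg (hPX x).le ((hK x).1 u))
      (hgnn Ph hPh u)
  have hNnn : 0 ≤ sSup Nset := by
    apply Real.sSup_nonneg
    rintro w ⟨Ph, hPh, rfl⟩
    exact Finset.sum_nonneg fun y _ => Finset.sum_nonneg fun u _ => mul_nonneg
      (Finset.sum_nonneg fun x _ => mul_nonneg ((hK x).1 u) (hPnn x y))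
      (hgnn _ (hPh y) u)
  rcases eq_or_lt_of_le hDnn with hD0 | hDpos
  · rw [← hD0, div_zero, Real.log_zero]
    exact Real.log_nonneg hS1
  · have hbdd : BddAbove Dset := by
      by_contra h
      rw [Real.sSup_of_not_bddAbove h] at hDpos
      exact lt_irrefl 0 hDpos
    have hub : ∀ Ph : U → ℝ, IsPMF Ph →
        ∑ u, (∑ x, (∑ y, P x y) * K x u) * g (Ph u) ≤ sSup Dset := by
      intro Ph hPh
      exact le_csSup hbdd ⟨Ph, hPh, rfl⟩
    have hNle : sSup Nset ≤ (∑ y, Finset.univ.sup' Finset.univ_nonempty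
        (fun x => P x y / ∑ y', P x y')) * sSup Dset := by
      apply Real.sSup_le
      · rintro w ⟨Ph, hPh, rfl⟩
        exact key _ hub Ph hPh
      · exact mul_nonneg (le_trans one_pos.le hS1) hDnn
    have hratio : sSup Nset / sSup Dset ≤
        ∑ y, Finset.univ.sup' Finset.univ_nonempty
          (fun x => P x y / ∑ y', P x y') := by
      rw [div_le_iff₀ hDpos]
      exact hNle
    rcases eq_or_lt_of_le hNnn with hN0 | hNpos
    · rw [← hN0, zero_div, Real.log_zero]
      exact Real.log_nonneg hS1
    · exact Real.log_le_log (div_pos hNpos hDpos) hratio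
end

section
/- Let P_{XY} be a joint pmf on finite alphabets 𝒳×𝒴 with P_X(x)>0 for every x∈𝒳. For the identity gain function g(t)=t, the maximal g-leakage equals the maximal leakage: sup over finite alphabets 𝒰 and channels P_{U|X} of log[ (Σ_{y∈𝒴} P_Y(y)·max_u P_{U|Y}(u|y)) / (max_u P_U(u)) ] = log Σ_{y∈𝒴} max_{x∈𝒳} P_{Y|X}(y|x), where P_{U|Y}(u|y)=Σ_x P_{X|Y}(x|y)P_{U|X}(u|x). -/
open Finset

/-- For the identity gain function, the ratio of posterior to prior maximal expected gains:
`(∑_y P_Y(y) max_u P_{U|Y}(u|y)) / (max_u P_U(u))`, where `P_{U|Y}(u|y) = ∑_x P_{X|Y}(x|y) K(u|x)`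
and `P_U(u) = ∑_x P_X(x) K(u|x)`. -/
noncomputable def idRatio {X Y U : Type*} [Fintype X] [Fintype Y] [Fintype U] [Nonempty U]
    (P : X → Y → ℝ) (K : X → U → ℝ) : ℝ :=
  (∑ y, (∑ x, P x y) *
      Finset.univ.sup' Finset.univ_nonempty
        (fun u => ∑ x, (P x y / ∑ x', P x' y) * K x u)) /
    Finset.univ.sup' Finset.univ_nonempty (fun u => ∑ x, (∑ y', P x y') * K x u)

section Aux

variable {X Y : Type} [Fintype X] [Fintype Y] [Nonempty X]

/-- Upper bound: for every channel, `0 ≤ idRatio ≤ T`. -/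
lemma ratio_bounds {U : Type} [Fintype U] [Nonempty U]
    (P : X → Y → ℝ) (hP0 : ∀ x y, 0 ≤ P x y)
    (hPX : ∀ x, 0 < ∑ y, P x y) (K : X → U → ℝ) (hK : IsChannel K) :
    0 ≤ idRatio P K ∧
      idRatio P K ≤ ∑ y, Finset.univ.sup' Finset.univ_nonempty
        (fun x => P x y / ∑ y', P x y') := by
  set Q : X → ℝ := fun x => ∑ y', P x y' with hQ
  set D : ℝ := Finset.univ.sup' Finset.univ_nonempty (fun u => ∑ x, Q x * K x u) with hD
  set N : ℝ := ∑ y, (∑ x, P x y) *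
      Finset.univ.sup' Finset.univ_nonempty
        (fun u => ∑ x, (P x y / ∑ x', P x' y) * K x u) with hN
  have hKnn : ∀ x u, 0 ≤ K x u := fun x u => (hK x).1 u
  have hDpos : 0 < D := by
    obtain ⟨x₀⟩ := ‹Nonempty X›
    have hsum : ∑ u, ∑ x, Q x * K x u = ∑ x, Q x := by
      rw [Finset.sum_comm]
      refine Finset.sum_congr rfl fun x _ => ?_
      rw [← Finset.mul_sum, (hK x).2, mul_one]
    have hpos : 0 < ∑ u, ∑ x, Q x * K x u := by
      rw [hsum]
      exact Finset.sum_pos (fun x _ => hPX x) ⟨x₀, Finset.mem_univ x₀⟩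
    obtain ⟨u, _, hu⟩ : ∃ u ∈ Finset.univ, 0 < ∑ x, Q x * K x u := by
      by_contra h
      push_neg at h
      have : ∑ u, ∑ x, Q x * K x u ≤ 0 :=
        Finset.sum_nonpos fun u hu => h u hu
      linarith
    exact lt_of_lt_of_le hu (Finset.le_sup' (fun u => ∑ x, Q x * K x u) (Finset.mem_univ u))
  have hMnn : ∀ y, 0 ≤ Finset.univ.sup' Finset.univ_nonempty (fun x => P x y / Q x) := by
    intro y
    obtain ⟨x₀⟩ := ‹Nonempty X›
    exact le_trans (div_nonneg (hP0 x₀ y) (le_of_lt (hPX x₀)))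
      (Finset.le_sup' (fun x => P x y / Q x) (Finset.mem_univ x₀))
  have hNnn : 0 ≤ N := by
    refine Finset.sum_nonneg fun y _ => mul_nonneg
      (Finset.sum_nonneg fun x _ => hP0 x y) ?_
    obtain ⟨u₀⟩ := ‹Nonempty U›
    refine le_trans ?_ (Finset.le_sup' _ (Finset.mem_univ u₀))
    exact Finset.sum_nonneg fun x _ => mul_nonneg
      (div_nonneg (hP0 x y) (Finset.sum_nonneg fun x' _ => hP0 x' y)) (hKnn x u₀)
  have hNT : N ≤ (∑ y, Finset.univ.sup' Finset.univ_nonempty (fun x => P x y / Q x)) * D := by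
    rw [Finset.sum_mul]
    refine Finset.sum_le_sum fun y _ => ?_
    set M : ℝ := Finset.univ.sup' Finset.univ_nonempty (fun x => P x y / Q x) with hM
    rcases eq_or_lt_of_le (Finset.sum_nonneg fun x (_ : x ∈ Finset.univ) => hP0 x y) with h0 | h0
    · rw [← h0, zero_mul]
      exact mul_nonneg (hMnn y) (le_of_lt hDpos)
    · have hPy : (0:ℝ) < ∑ x, P x y := h0
      have hsup : Finset.univ.sup' Finset.univ_nonempty
          (fun u => ∑ x, (P x y / ∑ x', P x' y) * K x u) ≤ M * D / (∑ x, P x y) := by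
        refine Finset.sup'_le _ _ fun u _ => ?_
        have h1 : ∑ x, (P x y / ∑ x', P x' y) * K x u
            = (∑ x, P x y * K x u) / (∑ x, P x y) := by
          rw [Finset.sum_div]
          exact Finset.sum_congr rfl fun x _ => by rw [div_mul_eq_mul_div]
        rw [h1]
        have h2 : ∑ x, P x y * K x u ≤ M * D := by
          have h3 : ∑ x, P x y * K x u ≤ ∑ x, M * Q x * K x u := by
            refine Finset.sum_le_sum fun x _ => ?_
            have : P x y ≤ M * Q x := by
              have := Finset.le_sup' (fun x => P x y / Q x) (Finset.mem_univ x)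
              rw [← hM] at this
              calc P x y = P x y / Q x * Q x :=
                    (div_mul_cancel₀ _ (ne_of_gt (hPX x))).symm
                _ ≤ M * Q x := by
                    exact mul_le_mul_of_nonneg_right this (le_of_lt (hPX x))
            exact mul_le_mul_of_nonneg_right this (hKnn x u)
          have h4 : ∑ x, M * Q x * K x u = M * ∑ x, Q x * K x u := by
            rw [Finset.mul_sum]
            exact Finset.sum_congr rfl fun x _ => by ring
          rw [h4] at h3
          refine le_trans h3 (mul_le_mul_of_nonneg_left ?_ (hMnn y))
          exact Finset.le_sup' (fun u => ∑ x, Q x * K x u) (Finset.mem_univ u)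
        gcongr
      calc (∑ x, P x y) * Finset.univ.sup' Finset.univ_nonempty
            (fun u => ∑ x, (P x y / ∑ x', P x' y) * K x u)
          ≤ (∑ x, P x y) * (M * D / (∑ x, P x y)) :=
            mul_le_mul_of_nonneg_left hsup (le_of_lt hPy)
        _ = M * D := by field_simp
  constructor
  · exact div_nonneg hNnn (le_of_lt hDpos)
  · rw [idRatio]
    rw [div_le_iff₀ hDpos]
    exact hNT

end Aux

section Shatter

variable {X Y : Type} [Fintype X] [Fintype Y] [Nonempty X]

lemma shatter_bound (P : X → Y → ℝ) (hP0 : ∀ x y, 0 ≤ P x y)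
    (hPsum : ∑ x, ∑ y, P x y = 1)
    (hPX : ∀ x, 0 < ∑ y, P x y) (n : ℕ) (hn : 1 ≤ n) (xm : Y → X) :
    ∃ (K : X → (X × Fin (n+1)) → ℝ), IsChannel K ∧
      (∑ y, ((n:ℝ) * P (xm y) y) / ((n:ℝ) * (∑ y', P (xm y) y') + 1)) ≤ idRatio P K := by
  classical
  have hn' : (0:ℝ) < n := by exact_mod_cast hn
  set Q : X → ℝ := fun x => ∑ y', P x y' with hQ
  set m : X → ℕ := fun x => ⌈(n:ℝ) * Q x⌉₊ with hm
  have hm1 : ∀ x, 0 < m x := fun x => Nat.ceil_pos.mpr (mul_pos hn' (hPX x))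
  have hmR : ∀ x, (0:ℝ) < (m x : ℝ) := fun x => by exact_mod_cast hm1 x
  have hQ1 : ∀ x, Q x ≤ 1 := by
    intro x
    rw [← hPsum]
    exact Finset.single_le_sum (f := fun x => ∑ y, P x y)
      (fun x _ => Finset.sum_nonneg fun y _ => hP0 x y) (Finset.mem_univ x)
  have hmn : ∀ x, m x ≤ n + 1 := by
    intro x
    refine Nat.ceil_le.mpr ?_
    push_cast
    nlinarith [hQ1 x, hPX x]
  have hmlow : ∀ x, (n:ℝ) * Q x ≤ m x := fun x => Nat.le_ceil _
  have hmhigh : ∀ x, (m x : ℝ) ≤ (n:ℝ) * Q x + 1 := by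
    intro x
    exact le_of_lt (Nat.ceil_lt_add_one (mul_nonneg hn'.le (hPX x).le))
  set K : X → (X × Fin (n+1)) → ℝ :=
    fun x p => if p.1 = x ∧ (p.2 : ℕ) < m x then ((m x : ℝ))⁻¹ else 0 with hK
  have hKval : ∀ (g : X → ℝ) (x : X) (i : Fin (n+1)),
      (∑ x', g x' * K x' (x, i)) = g x * (if (i:ℕ) < m x then ((m x : ℝ))⁻¹ else 0) := by
    intro g x i
    rw [Finset.sum_eq_single x]
    · simp [hK]
    · intro b _ hb
      have : ¬ (x = b ∧ (i:ℕ) < m b) := fun h => hb h.1.symm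
      simp [hK, this]
    · intro h
      exact absurd (Finset.mem_univ x) h
  have hchan : IsChannel K := by
    intro x
    constructor
    · intro p
      rw [hK]
      dsimp only
      split
      · positivity
      · exact le_refl 0
    · rw [Fintype.sum_prod_type]
      rw [Finset.sum_eq_single x]
      · have hfilter : Finset.filter (fun i => i < m x) (Finset.range (n+1))
            = Finset.range (m x) := by
          ext i
          simp only [Finset.mem_filter, Finset.mem_range]
          constructor
          · exact fun h => h.2
          · intro h
            exact ⟨lt_of_lt_of_le h (hmn x), h⟩
        have : ∑ i : Fin (n+1), K x (x, i)
            = ∑ i ∈ Finset.range (n+1), (if i < m x then ((m x : ℝ))⁻¹ else 0) := by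
          rw [← Fin.sum_univ_eq_sum_range]
          refine Finset.sum_congr rfl fun i _ => ?_
          simp [hK]
        rw [this, ← Finset.sum_filter, hfilter, Finset.sum_const, Finset.card_range,
          nsmul_eq_mul]
        exact mul_inv_cancel₀ (ne_of_gt (hmR x))
      · intro b _ hb
        refine Finset.sum_eq_zero fun i _ => ?_
        have : ¬ (b = x ∧ (i:ℕ) < m x) := fun h => hb h.1
        simp [hK, this]
      · intro h
        exact absurd (Finset.mem_univ x) h
  refine ⟨K, hchan, ?_⟩
  -- now the bound
  set D : ℝ := Finset.univ.sup' Finset.univ_nonempty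
      (fun u : X × Fin (n+1) => ∑ x, (∑ y', P x y') * K x u) with hD
  set N : ℝ := ∑ y, (∑ x, P x y) *
      Finset.univ.sup' Finset.univ_nonempty
        (fun u : X × Fin (n+1) => ∑ x, (P x y / ∑ x', P x' y) * K x u) with hN
  obtain ⟨x₀⟩ := ‹Nonempty X›
  have hDle : D ≤ 1 / n := by
    refine Finset.sup'_le _ _ ?_
    rintro ⟨x, i⟩ _
    rw [hKval Q x i]
    split
    · have h : Q x / (m x : ℝ) ≤ 1 / (n:ℝ) := by
        rw [div_le_div_iff₀ (hmR x) hn']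
        nlinarith [hmlow x]
      rw [← div_eq_mul_inv]
      exact h
    · rw [mul_zero]
      positivity
  have hDpos : 0 < D := by
    have hval : ∑ x, (∑ y', P x y') * K x (x₀, (0 : Fin (n+1)))
        = Q x₀ * ((m x₀ : ℝ))⁻¹ := by
      rw [hKval Q x₀ 0]
      simp [hm1 x₀]
    refine lt_of_lt_of_le ?_
      (Finset.le_sup' (fun u : X × Fin (n+1) => ∑ x, (∑ y', P x y') * K x u)
        (Finset.mem_univ (x₀, (0 : Fin (n+1)))))
    rw [hval]
    exact mul_pos (hPX x₀) (inv_pos.mpr (hmR x₀))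
  set L : ℝ := ∑ y, P (xm y) y / (m (xm y) : ℝ) with hL
  have hLnn : 0 ≤ L := Finset.sum_nonneg fun y _ => div_nonneg (hP0 _ y) (le_of_lt (hmR _))
  have hNge : L ≤ N := by
    refine Finset.sum_le_sum fun y _ => ?_
    rcases eq_or_lt_of_le (Finset.sum_nonneg fun x (_ : x ∈ Finset.univ) => hP0 x y) with h0 | h0
    · have hxy : P (xm y) y = 0 := by
        have := (Finset.sum_eq_zero_iff_of_nonneg (fun x (_ : x ∈ Finset.univ) => hP0 x y)).mp h0.symm
        exact this (xm y) (Finset.mem_univ _)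
      rw [hxy, ← h0]
      simp
    · have hPy : (0:ℝ) < ∑ x, P x y := h0
      have hval : ∑ x, (P x y / ∑ x', P x' y) * K x (xm y, (0 : Fin (n+1)))
          = (P (xm y) y / ∑ x', P x' y) * ((m (xm y) : ℝ))⁻¹ := by
        rw [hKval (fun x => P x y / ∑ x', P x' y) (xm y) 0]
        simp [hm1 (xm y)]
      have hsup : (P (xm y) y / ∑ x', P x' y) * ((m (xm y) : ℝ))⁻¹
          ≤ Finset.univ.sup' Finset.univ_nonempty
            (fun u : X × Fin (n+1) => ∑ x, (P x y / ∑ x', P x' y) * K x u) := by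
        rw [← hval]
        exact Finset.le_sup' (fun u : X × Fin (n+1) => ∑ x, (P x y / ∑ x', P x' y) * K x u)
          (Finset.mem_univ (xm y, (0 : Fin (n+1))))
      have heq : (∑ x, P x y) * ((P (xm y) y / ∑ x', P x' y) * ((m (xm y) : ℝ))⁻¹)
          = P (xm y) y / (m (xm y) : ℝ) := by
        field_simp
      calc P (xm y) y / (m (xm y) : ℝ)
          = (∑ x, P x y) * ((P (xm y) y / ∑ x', P x' y) * ((m (xm y) : ℝ))⁻¹) := heq.symm
        _ ≤ (∑ x, P x y) * Finset.univ.sup' Finset.univ_nonempty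
            (fun u : X × Fin (n+1) => ∑ x, (P x y / ∑ x', P x' y) * K x u) :=
            mul_le_mul_of_nonneg_left hsup (le_of_lt hPy)
  have ht : (∑ y, ((n:ℝ) * P (xm y) y) / ((n:ℝ) * Q (xm y) + 1)) ≤ (n:ℝ) * L := by
    rw [hL, Finset.mul_sum]
    refine Finset.sum_le_sum fun y _ => ?_
    rw [← mul_div_assoc]
    gcongr
    · exact mul_nonneg hn'.le (hP0 _ y)
    · exact hmR (xm y)
    · exact hmhigh (xm y)
  have hnL : (n:ℝ) * L ≤ L / D := by
    have h1 : (n:ℝ) * L = L / (1/(n:ℝ)) := by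
      rw [one_div, div_eq_mul_inv, inv_inv, mul_comm]
    rw [h1]
    exact div_le_div_of_nonneg_left hLnn hDpos hDle
  have hLD : L / D ≤ N / D := by gcongr
  have : idRatio P K = N / D := rfl
  rw [this]
  exact le_trans ht (le_trans hnL hLD)

end Shatter

/-- For the identity gain function `g(t) = t`, the maximal `g`-leakage equals
the maximal leakage `log ∑_y max_x P_{Y|X}(y|x)`. -/
theorem stmt1 {X Y : Type} [Fintype X] [Fintype Y] [Nonempty X]
    (P : X → Y → ℝ) (hP : IsPMF (fun z : X × Y => P z.1 z.2))
    (hPX : ∀ x, 0 < ∑ y, P x y) :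
    IsLUB
      {r : ℝ | ∃ (U : Type) (iU : Fintype U) (nU : Nonempty U) (K : X → U → ℝ),
        @IsChannel X U iU K ∧
        r = Real.log (@idRatio X Y U inferInstance inferInstance iU nU P K)}
      (Real.log (∑ y, Finset.univ.sup' Finset.univ_nonempty
        (fun x => P x y / ∑ y', P x y'))) := by
  classical
  have hP0 : ∀ x y, 0 ≤ P x y := fun x y => hP.1 (x, y)
  have hPsum : ∑ x, ∑ y, P x y = 1 := by
    have := hP.2
    rw [Fintype.sum_prod_type] at this
    exact this
  set T : ℝ := ∑ y, Finset.univ.sup' Finset.univ_nonempty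
      (fun x => P x y / ∑ y', P x y') with hT
  have hT1 : (1:ℝ) ≤ T := by
    obtain ⟨x₀⟩ := ‹Nonempty X›
    have h1 : (1:ℝ) = ∑ y, P x₀ y / ∑ y', P x₀ y' := by
      rw [← Finset.sum_div, div_self (ne_of_gt (hPX x₀))]
    rw [h1]
    exact Finset.sum_le_sum fun y _ =>
      Finset.le_sup' (fun x => P x y / ∑ y', P x y') (Finset.mem_univ x₀)
  have hTpos : (0:ℝ) < T := lt_of_lt_of_le one_pos hT1
  constructor
  · rintro r ⟨U, iU, nU, K, hK, rfl⟩
    obtain ⟨h0, h1⟩ := @ratio_bounds X Y _ _ _ U iU nU P hP0 hPX K hK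
    rcases le_or_gt (idRatio P K) 1 with h | h
    · exact le_trans (Real.log_nonpos h0 h) (Real.log_nonneg hT1)
    · exact Real.log_le_log (lt_trans one_pos h) h1
  · intro b hb
    have hxm : ∀ y : Y, ∃ x ∈ (Finset.univ : Finset X),
        Finset.univ.sup' Finset.univ_nonempty (fun x => P x y / ∑ y', P x y')
          = P x y / ∑ y', P x y' :=
      fun y => Finset.exists_mem_eq_sup' _ _
    choose xm _ hxm2 using hxm
    set t : ℕ → ℝ := fun n =>
      ∑ y, ((n:ℝ) * P (xm y) y) / ((n:ℝ) * (∑ y', P (xm y) y') + 1) with htdef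
    have htend : Filter.Tendsto t Filter.atTop (nhds T) := by
      have hTeq : T = ∑ y, P (xm y) y / (∑ y', P (xm y) y') :=
        Finset.sum_congr rfl fun y _ => hxm2 y
      rw [hTeq]
      apply tendsto_finset_sum
      intro y _
      have hq : (0:ℝ) < ∑ y', P (xm y) y' := hPX (xm y)
      have h2 : Filter.Tendsto (fun n : ℕ => (∑ y', P (xm y) y') + 1/(n:ℝ))
          Filter.atTop (nhds (∑ y', P (xm y) y')) := by
        have h3 := tendsto_one_div_atTop_nhds_zero_nat (𝕜 := ℝ)
        simpa using (Filter.Tendsto.const_add (∑ y', P (xm y) y') h3)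
      have key : Filter.Tendsto (fun n : ℕ => P (xm y) y / ((∑ y', P (xm y) y') + 1/(n:ℝ)))
          Filter.atTop (nhds (P (xm y) y / ∑ y', P (xm y) y')) :=
        Filter.Tendsto.div tendsto_const_nhds h2 (ne_of_gt hq)
      refine key.congr' ?_
      filter_upwards [Filter.eventually_ge_atTop 1] with n hn
      have hn0 : (n:ℝ) ≠ 0 := by
        have : (0:ℕ) < n := hn
        exact_mod_cast ne_of_gt this
      field_simp
    have hlog : Filter.Tendsto (fun n => Real.log (t n)) Filter.atTop
        (nhds (Real.log T)) :=
      (Real.continuousAt_log (ne_of_gt hTpos)).tendsto.comp htend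
    -- a point of positivity
    obtain ⟨x₁⟩ := ‹Nonempty X›
    obtain ⟨y₀, hy₀⟩ : ∃ y₀, 0 < P x₁ y₀ := by
      by_contra h
      push_neg at h
      have : ∑ y, P x₁ y ≤ 0 := Finset.sum_nonpos fun y _ => h y
      linarith [hPX x₁]
    have hxmy₀ : 0 < P (xm y₀) y₀ := by
      have hr : 0 < P (xm y₀) y₀ / ∑ y', P (xm y₀) y' := by
        refine lt_of_lt_of_le (div_pos hy₀ (hPX x₁)) ?_
        rw [← hxm2 y₀]
        exact Finset.le_sup' (fun x => P x y₀ / ∑ y', P x y') (Finset.mem_univ x₁)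
      by_contra h
      push_neg at h
      have h0 : P (xm y₀) y₀ = 0 := le_antisymm h (hP0 _ _)
      rw [h0, zero_div] at hr
      exact lt_irrefl 0 hr
    refine le_of_tendsto hlog ?_
    filter_upwards [Filter.eventually_ge_atTop 1] with n hn
    obtain ⟨K, hK, hle⟩ := shatter_bound P hP0 hPsum hPX n hn xm
    have hb' := hb ⟨X × Fin (n+1), inferInstance, inferInstance, K, hK, rfl⟩
    have hnR : (0:ℝ) < n := by exact_mod_cast hn
    have htpos : 0 < t n := by
      refine Finset.sum_pos' (fun y _ => ?_) ⟨y₀, Finset.mem_univ y₀, ?_⟩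
      · exact div_nonneg (mul_nonneg hnR.le (hP0 _ _))
          (add_nonneg (mul_nonneg hnR.le (hPX _).le) zero_le_one)
      · exact div_pos (mul_pos hnR hxmy₀)
          (lt_of_lt_of_le zero_lt_one (le_add_of_nonneg_left
            (mul_nonneg hnR.le (hPX _).le)))
    exact le_trans (Real.log_le_log htpos hle) hb'
end

section
/- Let P_{XY} be a joint pmf on finite alphabets 𝒳×𝒴 with P_X(x)>0 for every x∈𝒳. Let g:[0,1]→[0,∞) be a concave function with g(0)=0 that is differentiable at 0 with 0 < g′(0) < ∞. Then the maximal g-leakage equals the maximal leakage: sup over finite alphabets 𝒰 and channels P_{U|X} of log[ (sup over families of pmfs (P̂_y)_{y∈𝒴} on 𝒰 of Σ_{u,y} P_{UY}(u,y)g(P̂_y(u))) / (sup over pmfs P̂ on 𝒰 of Σ_u P_U(u)g(P̂(u))) ] = log Σ_{y∈𝒴} max_{x∈𝒳} P_{Y|X}(y|x). -/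
open Finset

/-- The pmf induced on `U` by a pmf `P` on `X` and a channel `K`. -/
noncomputable def push {X U : Type*} [Fintype X] (P : X → ℝ) (K : X → U → ℝ) : U → ℝ :=
  fun u => ∑ x, P x * K x u

/-- The maximal expected gain `sup_{P̂} ∑_u R(u) g(P̂(u))` of a guessing adversary. -/
noncomputable def maxGain {U : Type*} [Fintype U] (g : ℝ → ℝ) (R : U → ℝ) : ℝ :=
  sSup {v : ℝ | ∃ Ph : U → ℝ, IsPMF Ph ∧ v = ∑ u, R u * g (Ph u)}

/-- The maximal posterior expected gain, over families `(P̂_y)_y` of guessing pmfs, for a joint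
distribution `R(u,y)` on `U × Y`. -/
noncomputable def maxGainFam {Y U : Type*} [Fintype Y] [Fintype U]
    (g : ℝ → ℝ) (R : U → Y → ℝ) : ℝ :=
  sSup {v : ℝ | ∃ Ph : Y → U → ℝ, (∀ y, IsPMF (Ph y)) ∧
    v = ∑ y, ∑ u, R u y * g (Ph y u)}

/-- The ratio of posterior to prior maximal expected gains for a gain function `g`,
a joint pmf `P` on `X × Y` and a channel `K = P_{U|X}`. -/
noncomputable def gRatio {X Y U : Type*} [Fintype X] [Fintype Y] [Fintype U]
    (g : ℝ → ℝ) (P : X → Y → ℝ) (K : X → U → ℝ) : ℝ :=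
  maxGainFam g (fun u y => ∑ x, K x u * P x y) /
    maxGain g (push (fun x => ∑ y, P x y) K)

section AuxLemmas

lemma aux_g_le {g : ℝ → ℝ} {d : ℝ} (hgconc : ConcaveOn ℝ (Set.Icc (0:ℝ) 1) g)
    (hg0 : g 0 = 0) (hgd : HasDerivWithinAt g d (Set.Icc (0:ℝ) 1) 0) :
    ∀ t ∈ Set.Icc (0:ℝ) 1, g t ≤ d * t := by
  intro t ht
  rcases eq_or_lt_of_le ht.1 with h0 | h0
  · simp [← h0, hg0]
  · have hslope := hasDerivWithinAt_iff_tendsto_slope.mp hgd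
    rw [Set.Icc_diff_left] at hslope
    have hne : Filter.NeBot (nhdsWithin (0:ℝ) (Set.Ioc 0 1)) :=
      left_nhdsWithin_Ioc_neBot zero_lt_one
    have hev : ∀ᶠ s in nhdsWithin (0:ℝ) (Set.Ioc 0 1), g t / t ≤ slope g 0 s := by
      filter_upwards [self_mem_nhdsWithin,
        eventually_nhdsWithin_of_eventually_nhds (eventually_lt_nhds h0)] with s hs hst
      have hs0 : 0 < s := hs.1
      have hst' : s ≤ t := le_of_lt hst
      have ht0 : t ≠ 0 := ne_of_gt h0
      have ha : (0:ℝ) ≤ 1 - s / t := by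
        have : s / t ≤ 1 := (div_le_one h0).mpr hst'
        linarith
      have hb : (0:ℝ) ≤ s / t := by positivity
      have hcomb := hgconc.2 (Set.left_mem_Icc.mpr zero_le_one) ht ha hb (by ring)
      have heq : (1 - s / t) • (0:ℝ) + (s / t) • t = s := by
        field_simp
        rw [smul_eq_mul, smul_eq_mul, mul_zero, zero_add, div_mul_cancel₀ s ht0]
      rw [heq] at hcomb
      have hgs : (s / t) * g t ≤ g s := by
        simpa [hg0, smul_eq_mul] using hcomb
      rw [slope_def_field]
      rw [hg0, sub_zero, sub_zero, le_div_iff₀ hs0]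
      calc g t / t * s = (s / t) * g t := by ring
        _ ≤ g s := hgs
    have := ge_of_tendsto hslope hev
    rw [div_le_iff₀ h0] at this
    linarith [this]

lemma aux_g_ge {g : ℝ → ℝ} {d : ℝ} (hgd : HasDerivWithinAt g d (Set.Icc (0:ℝ) 1) 0)
    (hg0 : g 0 = 0) {ε : ℝ} (hε : 0 < ε) :
    ∃ δ > 0, ∀ t : ℝ, 0 < t → t ≤ δ → t ≤ 1 → (d - ε) * t ≤ g t := by
  have hslope := hasDerivWithinAt_iff_tendsto_slope.mp hgd
  rw [Set.Icc_diff_left] at hslope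
  rw [Metric.tendsto_nhdsWithin_nhds] at hslope
  obtain ⟨δ, hδ, hδ'⟩ := hslope ε hε
  refine ⟨δ / 2, by linarith, fun t ht0 htδ ht1 => ?_⟩
  have hmem : t ∈ Set.Ioc (0:ℝ) 1 := ⟨ht0, ht1⟩
  have hdist : dist t 0 < δ := by
    rw [Real.dist_eq, sub_zero, abs_of_pos ht0]; linarith
  have := hδ' hmem hdist
  rw [Real.dist_eq] at this
  have habs := abs_lt.mp this
  have hsl : slope g 0 t = g t / t := by
    rw [slope_def_field, hg0, sub_zero, sub_zero]
  rw [hsl] at habs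
  have : d - ε < g t / t := by linarith [habs.1]
  calc (d - ε) * t ≤ (g t / t) * t := by nlinarith
    _ = g t := by field_simp

lemma pmf_le_one {U : Type*} [Fintype U] {Ph : U → ℝ} (h : IsPMF Ph) (u : U) : Ph u ≤ 1 := by
  rw [← h.2]
  exact Finset.single_le_sum (fun a _ => h.1 a) (mem_univ u)

lemma pmf_exists {U : Type*} [Fintype U] [Nonempty U] : ∃ Ph : U → ℝ, IsPMF Ph := by
  classical
  obtain ⟨u0⟩ := (inferInstance : Nonempty U)
  refine ⟨fun u => if u = u0 then 1 else 0, fun u => by dsimp only; split <;> norm_num, ?_⟩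
  simp

lemma gain_sum_le {U : Type*} [Fintype U] {g : ℝ → ℝ} {d : ℝ}
    (hgle : ∀ t ∈ Set.Icc (0:ℝ) 1, g t ≤ d * t)
    {R : U → ℝ} {c : ℝ} (hR : ∀ u, 0 ≤ R u) (hRc : ∀ u, R u ≤ c) (hd : 0 < d)
    {Ph : U → ℝ} (hPh : IsPMF Ph) :
    ∑ u, R u * g (Ph u) ≤ d * c := by
  calc ∑ u, R u * g (Ph u) ≤ ∑ u, c * (d * Ph u) := by
        apply Finset.sum_le_sum
        intro u _
        have h1 : g (Ph u) ≤ d * Ph u := hgle _ ⟨hPh.1 u, pmf_le_one hPh u⟩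
        have h2 : R u * g (Ph u) ≤ R u * (d * Ph u) :=
          mul_le_mul_of_nonneg_left h1 (hR u)
        have h3 : R u * (d * Ph u) ≤ c * (d * Ph u) :=
          mul_le_mul_of_nonneg_right (hRc u) (mul_nonneg hd.le (hPh.1 u))
        linarith
    _ = c * d * ∑ u, Ph u := by
        rw [Finset.mul_sum]
        apply Finset.sum_congr rfl
        intro u _
        ring
    _ = d * c := by rw [hPh.2]; ring

lemma gain_sum_le' {U : Type*} [Fintype U] {g : ℝ → ℝ} {d : ℝ}
    (hgle : ∀ t ∈ Set.Icc (0:ℝ) 1, g t ≤ d * t)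
    {R : U → ℝ} (hR : ∀ u, 0 ≤ R u) (hd : 0 < d)
    {Ph : U → ℝ} (hPh : IsPMF Ph) :
    ∑ u, R u * g (Ph u) ≤ d * ∑ u, R u := by
  rw [Finset.mul_sum]
  apply Finset.sum_le_sum
  intro u _
  have h1 : g (Ph u) ≤ d * Ph u := hgle _ ⟨hPh.1 u, pmf_le_one hPh u⟩
  have h2 : d * Ph u ≤ d := by
    nlinarith [pmf_le_one hPh u, hPh.1 u]
  calc R u * g (Ph u) ≤ R u * d := mul_le_mul_of_nonneg_left (h1.trans h2) (hR u)
    _ = d * R u := by ring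

end AuxLemmas

lemma aux_upper {X Y U : Type} [Fintype X] [Fintype Y] [Fintype U] [Nonempty X]
    (P : X → Y → ℝ) (hP : IsPMF (fun z : X × Y => P z.1 z.2))
    (hPX : ∀ x, 0 < ∑ y, P x y)
    (g : ℝ → ℝ)
    (hgnn : ∀ t ∈ Set.Icc (0:ℝ) 1, 0 ≤ g t)
    (hgconc : ConcaveOn ℝ (Set.Icc (0:ℝ) 1) g)
    (hg0 : g 0 = 0)
    (d : ℝ) (hgd : HasDerivWithinAt g d (Set.Icc (0:ℝ) 1) 0) (hd : 0 < d)
    (K : X → U → ℝ) (hK : IsChannel K) :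
    Real.log (gRatio g P K) ≤
      Real.log (∑ y, Finset.univ.sup' Finset.univ_nonempty
        (fun x => P x y / ∑ y', P x y')) := by
  classical
  have hgle := aux_g_le hgconc hg0 hgd
  have hPnn : ∀ x y, 0 ≤ P x y := fun x y => hP.1 (x, y)
  set Q : X → ℝ := fun x => ∑ y, P x y with hQ
  set m : Y → ℝ := fun y => Finset.univ.sup' Finset.univ_nonempty
      (fun x => P x y / Q x) with hm
  set M : ℝ := ∑ y, m y with hMdef
  have hm_ge : ∀ y x, P x y / Q x ≤ m y := by
    intro y x
    simp only [hm]
    exact Finset.le_sup' (fun x => P x y / Q x) (mem_univ x)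
  have hm_nn : ∀ y, 0 ≤ m y := fun y =>
    le_trans (div_nonneg (hPnn _ _) (hPX _).le) (hm_ge y (Classical.arbitrary X))
  have hM1 : 1 ≤ M := by
    set x0 := Classical.arbitrary X
    calc (1:ℝ) = ∑ y, P x0 y / Q x0 := by
          rw [← Finset.sum_div]
          rw [div_self (ne_of_gt (hPX x0))]
      _ ≤ M := Finset.sum_le_sum (fun y _ => hm_ge y x0)
  -- the key pointwise bound P x y ≤ m y * Q x
  have hkey : ∀ x y, P x y ≤ m y * Q x := by
    intro x y
    have := hm_ge y x
    rw [div_le_iff₀ (hPX x)] at this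
    linarith
  -- abbreviations
  have hU : Nonempty U := by
    rcases isEmpty_or_nonempty U with h | h
    · exfalso
      have := (hK (Classical.arbitrary X)).2
      rw [Finset.univ_eq_empty, Finset.sum_empty] at this
      norm_num at this
    · exact h
  set R : U → Y → ℝ := fun u y => ∑ x, K x u * P x y with hR
  set PU : U → ℝ := push Q K with hPU
  have hPUnn : ∀ u, 0 ≤ PU u := by
    intro u
    apply Finset.sum_nonneg
    intro x _
    exact mul_nonneg (le_of_lt (hPX x)) ((hK x).1 u)
  have hPUsum : ∑ u, PU u = 1 := by
    rw [hPU]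
    unfold push
    rw [Finset.sum_comm]
    have : ∀ x, ∑ u, Q x * K x u = Q x := by
      intro x
      rw [← Finset.mul_sum, (hK x).2, mul_one]
    rw [Finset.sum_congr rfl (fun x _ => this x)]
    rw [hQ]
    have := hP.2
    simpa [Fintype.sum_prod_type] using this
  have hPU1 : ∀ u, PU u ≤ 1 := by
    intro u
    rw [← hPUsum]
    exact Finset.single_le_sum (fun a _ => hPUnn a) (mem_univ u)
  have hRnn : ∀ u y, 0 ≤ R u y := by
    intro u y
    apply Finset.sum_nonneg
    intro x _
    exact mul_nonneg ((hK x).1 u) (hPnn x y)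
  have hkey2 : ∀ u y, R u y ≤ m y * PU u := by
    intro u y
    rw [hR]
    have : ∀ x, K x u * P x y ≤ m y * (Q x * K x u) := by
      intro x
      have h1 : K x u * P x y ≤ K x u * (m y * Q x) :=
        mul_le_mul_of_nonneg_left (hkey x y) ((hK x).1 u)
      calc K x u * P x y ≤ K x u * (m y * Q x) := h1
        _ = m y * (Q x * K x u) := by ring
    calc (∑ x, K x u * P x y) ≤ ∑ x, m y * (Q x * K x u) :=
          Finset.sum_le_sum (fun x _ => this x)
      _ = m y * PU u := by rw [← Finset.mul_sum]; rfl
  -- the denominator set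
  set SD := {v : ℝ | ∃ Ph : U → ℝ, IsPMF Ph ∧ v = ∑ u, PU u * g (Ph u)} with hSD
  have hSDne : SD.Nonempty := by
    obtain ⟨Ph0, hPh0⟩ := pmf_exists (U := U)
    exact ⟨_, Ph0, hPh0, rfl⟩
  have hSDbdd : BddAbove SD := by
    refine ⟨d * 1, ?_⟩
    rintro v ⟨Ph, hPh, rfl⟩
    exact gain_sum_le hgle hPUnn hPU1 hd hPh
  set D := maxGain g PU with hD
  have hDeq : D = sSup SD := rfl
  have hinner : ∀ Ph : U → ℝ, IsPMF Ph → ∑ u, PU u * g (Ph u) ≤ D :=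
    fun Ph hPh => le_csSup hSDbdd ⟨Ph, hPh, rfl⟩
  have hDnn : 0 ≤ D := by
    obtain ⟨Ph0, hPh0⟩ := pmf_exists (U := U)
    have h1 : (0:ℝ) ≤ ∑ u, PU u * g (Ph0 u) := by
      apply Finset.sum_nonneg
      intro u _
      exact mul_nonneg (hPUnn u) (hgnn _ ⟨hPh0.1 u, pmf_le_one hPh0 u⟩)
    exact le_trans h1 (hinner Ph0 hPh0)
  -- numerator
  set N := maxGainFam g R with hN
  have hNle : N ≤ M * D := by
    apply csSup_le
    · obtain ⟨Ph0, hPh0⟩ := pmf_exists (U := U)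
      exact ⟨_, fun _ => Ph0, fun _ => hPh0, rfl⟩
    · rintro v ⟨Ph, hPh, rfl⟩
      calc ∑ y, ∑ u, R u y * g (Ph y u)
          ≤ ∑ y, m y * D := by
            apply Finset.sum_le_sum
            intro y _
            calc ∑ u, R u y * g (Ph y u)
                ≤ ∑ u, (m y * PU u) * g (Ph y u) := by
                  apply Finset.sum_le_sum
                  intro u _
                  exact mul_le_mul_of_nonneg_right (hkey2 u y)
                    (hgnn _ ⟨(hPh y).1 u, pmf_le_one (hPh y) u⟩)
              _ = m y * ∑ u, PU u * g (Ph y u) := by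
                  rw [Finset.mul_sum]
                  apply Finset.sum_congr rfl
                  intro u _
                  ring
              _ ≤ m y * D := mul_le_mul_of_nonneg_left (hinner _ (hPh y)) (hm_nn y)
        _ = M * D := by rw [hMdef, Finset.sum_mul]
  have hNnn : 0 ≤ N := by
    obtain ⟨Ph0, hPh0⟩ := pmf_exists (U := U)
    have hmem : (∑ y, ∑ u, R u y * g (Ph0 u)) ∈
        {v : ℝ | ∃ Ph : Y → U → ℝ, (∀ y, IsPMF (Ph y)) ∧
          v = ∑ y, ∑ u, R u y * g (Ph y u)} := ⟨fun _ => Ph0, fun _ => hPh0, rfl⟩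
    have hbdd : BddAbove {v : ℝ | ∃ Ph : Y → U → ℝ, (∀ y, IsPMF (Ph y)) ∧
        v = ∑ y, ∑ u, R u y * g (Ph y u)} := by
      refine ⟨d * ∑ y, ∑ u, R u y, ?_⟩
      rintro v ⟨Ph, hPh, rfl⟩
      rw [Finset.mul_sum]
      apply Finset.sum_le_sum
      intro y _
      exact gain_sum_le' hgle (fun u => hRnn u y) hd (hPh y)
    have h0 : (0:ℝ) ≤ ∑ y, ∑ u, R u y * g (Ph0 u) := by
      apply Finset.sum_nonneg
      intro y _
      apply Finset.sum_nonneg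
      intro u _
      exact mul_nonneg (hRnn u y) (hgnn _ ⟨hPh0.1 u, pmf_le_one hPh0 u⟩)
    exact le_trans h0 (le_csSup hbdd hmem)
  -- conclude
  have hratio : gRatio g P K = N / D := rfl
  have hrationn : 0 ≤ gRatio g P K := by
    rw [hratio]
    exact div_nonneg hNnn hDnn
  have hratiole : gRatio g P K ≤ M := by
    rw [hratio]
    rcases hDnn.lt_or_eq with hDpos | hDzero
    · rw [div_le_iff₀ hDpos]
      exact hNle
    · rw [← hDzero, div_zero]
      linarith
  rcases hrationn.lt_or_eq with hpos | hzero
  · exact Real.log_le_log hpos hratiole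
  · rw [← hzero, Real.log_zero]
    exact Real.log_nonneg hM1

lemma aux_construct {X Y : Type} [Fintype X] [Fintype Y] [Nonempty X]
    (P : X → Y → ℝ) (hP : IsPMF (fun z : X × Y => P z.1 z.2))
    (hPX : ∀ x, 0 < ∑ y, P x y)
    (g : ℝ → ℝ)
    (hgnn : ∀ t ∈ Set.Icc (0:ℝ) 1, 0 ≤ g t)
    (hgconc : ConcaveOn ℝ (Set.Icc (0:ℝ) 1) g)
    (hg0 : g 0 = 0)
    (d : ℝ) (hgd : HasDerivWithinAt g d (Set.Icc (0:ℝ) 1) 0) (hd : 0 < d)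
    (ε : ℝ) (hε : 0 < ε) :
    ∃ (U : Type) (iU : Fintype U) (K : X → U → ℝ), @IsChannel X U iU K ∧
      Real.log (∑ y, Finset.univ.sup' Finset.univ_nonempty
        (fun x => P x y / ∑ y', P x y')) - ε ≤
        Real.log (@gRatio X Y U inferInstance inferInstance iU g P K) := by
  classical
  have hgle := aux_g_le hgconc hg0 hgd
  have hPnn : ∀ x y, 0 ≤ P x y := fun x y => hP.1 (x, y)
  set Q : X → ℝ := fun x => ∑ y, P x y with hQ
  set m : Y → ℝ := fun y => Finset.univ.sup' Finset.univ_nonempty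
      (fun x => P x y / Q x) with hm
  set M : ℝ := ∑ y, m y with hMdef
  have hm_ge : ∀ y x, P x y / Q x ≤ m y := by
    intro y x
    simp only [hm]
    exact Finset.le_sup' (fun x => P x y / Q x) (mem_univ x)
  have hM1 : 1 ≤ M := by
    set x0 := Classical.arbitrary X
    calc (1:ℝ) = ∑ y, P x0 y / Q x0 := by
          rw [← Finset.sum_div]
          rw [div_self (ne_of_gt (hPX x0))]
      _ ≤ M := Finset.sum_le_sum (fun y _ => hm_ge y x0)
  have hMpos : 0 < M := lt_of_lt_of_le one_pos hM1
  -- choose an argmax for each y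
  have hxs : ∀ y : Y, ∃ x : X, m y = P x y / Q x := by
    intro y
    obtain ⟨x, _, hx⟩ := Finset.exists_mem_eq_sup' (Finset.univ_nonempty) (fun x => P x y / Q x)
    exact ⟨x, by rw [hm]; exact hx⟩
  choose xs hxs_eq using hxs
  -- parameters
  set k : ℝ := Real.exp (-(ε / 2)) with hk
  have hk0 : 0 < k := Real.exp_pos _
  have hk1 : k < 1 := Real.exp_lt_one_iff.mpr (by linarith)
  have hε' : 0 < d * (1 - k) := by nlinarith
  obtain ⟨δ, hδ, hgδ⟩ := aux_g_ge hgd hg0 hε'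
  have hgk : ∀ t : ℝ, 0 < t → t ≤ δ → t ≤ 1 → d * k * t ≤ g t := by
    intro t h1 h2 h3
    have := hgδ t h1 h2 h3
    calc d * k * t = (d - d * (1 - k)) * t := by ring
      _ ≤ g t := this
  set q : ℝ := Finset.univ.inf' Finset.univ_nonempty Q with hq
  have hq_le : ∀ x, q ≤ Q x := fun x => Finset.inf'_le _ (mem_univ x)
  have hq0 : 0 < q := by
    obtain ⟨x, _, hx⟩ := Finset.exists_mem_eq_inf' (Finset.univ_nonempty) Q
    rw [hq, hx]
    exact hPX x
  set C : ℝ := max (1 / δ) (k / (1 - k)) / q with hC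
  set n : ℕ := ⌈C⌉₊ + 1 with hn
  have hnC : C ≤ (n : ℝ) := by
    have h1 : C ≤ (⌈C⌉₊ : ℝ) := Nat.le_ceil C
    have h2 : ((⌈C⌉₊ : ℕ) : ℝ) ≤ ((⌈C⌉₊ + 1 : ℕ) : ℝ) := by
      push_cast; linarith
    calc C ≤ (⌈C⌉₊ : ℝ) := h1
      _ ≤ (n : ℝ) := by rw [hn]; push_cast; linarith
  have hn0 : 0 < (n : ℝ) := by
    rw [hn]; push_cast; positivity
  have hnq1 : 1 / δ ≤ (n : ℝ) * q := by
    have : max (1 / δ) (k / (1 - k)) = C * q := by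
      rw [hC, div_mul_cancel₀ _ (ne_of_gt hq0)]
    calc 1 / δ ≤ max (1 / δ) (k / (1 - k)) := le_max_left _ _
      _ = C * q := this
      _ ≤ (n : ℝ) * q := mul_le_mul_of_nonneg_right hnC hq0.le
  have hnq2 : k / (1 - k) ≤ (n : ℝ) * q := by
    have : max (1 / δ) (k / (1 - k)) = C * q := by
      rw [hC, div_mul_cancel₀ _ (ne_of_gt hq0)]
    calc k / (1 - k) ≤ max (1 / δ) (k / (1 - k)) := le_max_right _ _
      _ = C * q := this
      _ ≤ (n : ℝ) * q := mul_le_mul_of_nonneg_right hnC hq0.le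
  -- the block sizes
  set nx : X → ℕ := fun x => ⌈(n : ℝ) * Q x⌉₊ with hnx
  have hnx_pos : ∀ x, 0 < nx x := by
    intro x
    rw [hnx]
    exact Nat.ceil_pos.mpr (mul_pos hn0 (hPX x))
  have hnx_posR : ∀ x, 0 < (nx x : ℝ) := fun x => by
    exact_mod_cast Nat.cast_pos.mpr (hnx_pos x)
  have hnx_ge : ∀ x, (n : ℝ) * Q x ≤ (nx x : ℝ) := fun x => Nat.le_ceil _
  have hnx_le : ∀ x, (nx x : ℝ) ≤ (n : ℝ) * Q x + 1 := by
    intro x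
    exact le_of_lt (Nat.ceil_lt_add_one (mul_pos hn0 (hPX x)).le)
  have hnx_big : ∀ x, 1 / δ ≤ (nx x : ℝ) := by
    intro x
    calc 1 / δ ≤ (n : ℝ) * q := hnq1
      _ ≤ (n : ℝ) * Q x := mul_le_mul_of_nonneg_left (hq_le x) hn0.le
      _ ≤ (nx x : ℝ) := hnx_ge x
  have hinv_small : ∀ x, ((nx x : ℝ))⁻¹ ≤ δ := by
    intro x
    rw [inv_le_comm₀ (hnx_posR x) hδ]
    calc δ⁻¹ = 1 / δ := (one_div δ).symm
      _ ≤ (nx x : ℝ) := hnx_big x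
  have hinv_le_one : ∀ x, ((nx x : ℝ))⁻¹ ≤ 1 := by
    intro x
    have h1 : (1 : ℝ) ≤ (nx x : ℝ) := by
      exact_mod_cast Nat.one_le_cast.mpr (hnx_pos x)
    rw [inv_le_one_iff₀]
    right; exact h1
  have hg_nx : ∀ x, d * k * ((nx x : ℝ))⁻¹ ≤ g (((nx x : ℝ))⁻¹) := by
    intro x
    exact hgk _ (inv_pos.mpr (hnx_posR x)) (hinv_small x) (hinv_le_one x)
  -- key: k * nx x ≤ n * Q x
  have hk_nx : ∀ x, k * (nx x : ℝ) ≤ (n : ℝ) * Q x := by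
    intro x
    have h1 : k / (1 - k) ≤ (n : ℝ) * Q x := by
      calc k / (1 - k) ≤ (n : ℝ) * q := hnq2
        _ ≤ (n : ℝ) * Q x := mul_le_mul_of_nonneg_left (hq_le x) hn0.le
    have h2 : k ≤ (n : ℝ) * Q x * (1 - k) := by
      rw [div_le_iff₀ (by linarith : (0:ℝ) < 1 - k)] at h1
      linarith
    have h3 : (nx x : ℝ) ≤ (n : ℝ) * Q x + 1 := hnx_le x
    nlinarith [hk0.le]
  -- the channel
  set U := Σ x : X, Fin (nx x) with hU
  set K : X → U → ℝ := fun x u => if u.1 = x then ((nx x : ℝ))⁻¹ else 0 with hK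
  have hKnn : ∀ x u, 0 ≤ K x u := by
    intro x u
    rw [hK]
    dsimp only
    split
    · positivity
    · exact le_refl 0
  have hUne : Nonempty U := ⟨⟨Classical.arbitrary X, ⟨0, hnx_pos _⟩⟩⟩
  have hKch : IsChannel K := by
    intro x
    constructor
    · exact hKnn x
    · rw [show (∑ u : U, K x u) = ∑ x', ∑ i : Fin (nx x'), K x ⟨x', i⟩ from
        Finset.sum_sigma _ _ _]
      have hinner : ∀ x', ∑ i : Fin (nx x'), K x ⟨x', i⟩ =
          if x' = x then (nx x' : ℝ) * ((nx x : ℝ))⁻¹ else 0 := by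
        intro x'
        rw [hK]
        dsimp only
        by_cases hxx : x' = x
        · simp [hxx]
        · simp [hxx]
      rw [Finset.sum_congr rfl (fun x' _ => hinner x')]
      rw [Finset.sum_ite_eq' Finset.univ x (fun x' => (nx x' : ℝ) * ((nx x : ℝ))⁻¹)]
      simp only [mem_univ, if_true]
      exact mul_inv_cancel₀ (ne_of_gt (hnx_posR x))
  -- induced distribution on U
  set PU : U → ℝ := push Q K with hPU
  have hPUval : ∀ u : U, PU u = Q u.1 * ((nx u.1 : ℝ))⁻¹ := by
    intro u
    rw [hPU]
    unfold push
    have : ∀ x, Q x * K x u = if x = u.1 then Q u.1 * ((nx u.1 : ℝ))⁻¹ else 0 := by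
      intro x
      rw [hK]
      dsimp only
      by_cases hxx : u.1 = x
      · rw [if_pos hxx, if_pos hxx.symm, ← hxx]
      · rw [if_neg hxx, if_neg (fun h => hxx h.symm), mul_zero]
    rw [Finset.sum_congr rfl (fun x _ => this x)]
    rw [Finset.sum_ite_eq' Finset.univ u.1 (fun _ => Q u.1 * ((nx u.1 : ℝ))⁻¹)]
    simp
  have hPUnn : ∀ u, 0 ≤ PU u := by
    intro u
    rw [hPUval]
    exact mul_nonneg (hPX u.1).le (inv_pos.mpr (hnx_posR u.1)).le
  have hPUle : ∀ u, PU u ≤ 1 / (n : ℝ) := by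
    intro u
    rw [hPUval]
    have h1 : ((nx u.1 : ℝ))⁻¹ ≤ ((n : ℝ) * Q u.1)⁻¹ := by
      apply inv_anti₀ (mul_pos hn0 (hPX u.1)) (hnx_ge u.1)
    calc Q u.1 * ((nx u.1 : ℝ))⁻¹ ≤ Q u.1 * ((n : ℝ) * Q u.1)⁻¹ :=
          mul_le_mul_of_nonneg_left h1 (hPX u.1).le
      _ = 1 / (n : ℝ) := by
          field_simp
          exact div_self (ne_of_gt (hPX u.1))
  -- denominator bounds
  set SD := {v : ℝ | ∃ Ph : U → ℝ, IsPMF Ph ∧ v = ∑ u, PU u * g (Ph u)} with hSD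
  have hSDne : SD.Nonempty := by
    obtain ⟨Ph0, hPh0⟩ := pmf_exists (U := U)
    exact ⟨_, Ph0, hPh0, rfl⟩
  have hSDbdd : BddAbove SD := by
    refine ⟨d * (1 / (n : ℝ)), ?_⟩
    rintro v ⟨Ph, hPh, rfl⟩
    exact gain_sum_le hgle hPUnn hPUle hd hPh
  set D := maxGain g PU with hD
  have hDle : D ≤ d * (1 / (n : ℝ)) := by
    apply csSup_le hSDne
    rintro v ⟨Ph, hPh, rfl⟩
    exact gain_sum_le hgle hPUnn hPUle hd hPh
  have hDpos : 0 < D := by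
    set x0 := Classical.arbitrary X with hx0
    set u0 : U := ⟨x0, ⟨0, hnx_pos x0⟩⟩ with hu0
    have hKx0 : IsPMF (K x0) := hKch x0
    have hterm : ∀ u : U, 0 ≤ PU u * g (K x0 u) := by
      intro u
      exact mul_nonneg (hPUnn u) (hgnn _ ⟨(hKx0).1 u, pmf_le_one hKx0 u⟩)
    have hsingle : PU u0 * g (K x0 u0) ≤ ∑ u, PU u * g (K x0 u) :=
      Finset.single_le_sum (fun u _ => hterm u) (mem_univ u0)
    have hv0 : PU u0 * g (K x0 u0) = Q x0 * ((nx x0 : ℝ))⁻¹ * g (((nx x0 : ℝ))⁻¹) := by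
      rw [hPUval]
      congr 2
      rw [hK, hu0]
      dsimp only
      rw [if_pos rfl]
    have hpos0 : 0 < PU u0 * g (K x0 u0) := by
      rw [hv0]
      have h1 : 0 < g (((nx x0 : ℝ))⁻¹) :=
        lt_of_lt_of_le (mul_pos (mul_pos hd hk0) (inv_pos.mpr (hnx_posR x0))) (hg_nx x0)
      have h2 : 0 < Q x0 * ((nx x0 : ℝ))⁻¹ :=
        mul_pos (hPX x0) (inv_pos.mpr (hnx_posR x0))
      exact mul_pos h2 h1
    have hmem : (∑ u, PU u * g (K x0 u)) ∈ SD := ⟨K x0, hKx0, rfl⟩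
    calc (0:ℝ) < PU u0 * g (K x0 u0) := hpos0
      _ ≤ ∑ u, PU u * g (K x0 u) := hsingle
      _ ≤ D := le_csSup hSDbdd hmem
  -- numerator
  set R : U → Y → ℝ := fun u y => ∑ x, K x u * P x y with hR
  have hRval : ∀ (u : U) (y : Y), R u y = ((nx u.1 : ℝ))⁻¹ * P u.1 y := by
    intro u y
    rw [hR]
    dsimp only
    have : ∀ x, K x u * P x y = if x = u.1 then ((nx u.1 : ℝ))⁻¹ * P u.1 y else 0 := by
      intro x
      rw [hK]
      dsimp only
      by_cases hxx : u.1 = x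
      · rw [if_pos hxx, if_pos hxx.symm, ← hxx]
      · rw [if_neg hxx, if_neg (fun h => hxx h.symm), zero_mul]
    rw [Finset.sum_congr rfl (fun x _ => this x)]
    rw [Finset.sum_ite_eq' Finset.univ u.1 (fun _ => ((nx u.1 : ℝ))⁻¹ * P u.1 y)]
    simp
  have hRnn : ∀ (u : U) (y : Y), 0 ≤ R u y := by
    intro u y
    rw [hRval]
    exact mul_nonneg (inv_pos.mpr (hnx_posR u.1)).le (hPnn _ _)
  have hval : ∀ y, (∑ u : U, R u y * g (K (xs y) u)) =
      P (xs y) y * g (((nx (xs y) : ℝ))⁻¹) := by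
    intro y
    rw [show (∑ u : U, R u y * g (K (xs y) u)) =
        ∑ x, ∑ i : Fin (nx x), R ⟨x, i⟩ y * g (K (xs y) ⟨x, i⟩) from Finset.sum_sigma _ _ _]
    have hterm : ∀ (x : X) (i : Fin (nx x)), R ⟨x, i⟩ y * g (K (xs y) ⟨x, i⟩) =
        if x = xs y then ((nx x : ℝ))⁻¹ * P x y * g (((nx (xs y) : ℝ))⁻¹) else 0 := by
      intro x i
      rw [hRval, hK]
      dsimp only
      by_cases hxx : x = xs y
      · rw [if_pos hxx, if_pos hxx]
      · rw [if_neg hxx, if_neg hxx, hg0, mul_zero]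
    rw [Finset.sum_congr rfl (fun x _ => Finset.sum_congr rfl (fun i _ => hterm x i))]
    have hconst : ∀ x : X, (∑ _i : Fin (nx x),
        if x = xs y then ((nx x : ℝ))⁻¹ * P x y * g (((nx (xs y) : ℝ))⁻¹) else 0)
        = if x = xs y then (nx x : ℝ) * (((nx x : ℝ))⁻¹ * P x y * g (((nx (xs y) : ℝ))⁻¹))
          else 0 := by
      intro x
      rw [Finset.sum_const, Finset.card_univ, Fintype.card_fin]
      split
      · rw [nsmul_eq_mul]
      · simp
    rw [Finset.sum_congr rfl (fun x _ => hconst x)]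
    rw [Finset.sum_ite_eq' Finset.univ (xs y)
      (fun x => (nx x : ℝ) * (((nx x : ℝ))⁻¹ * P x y * g (((nx (xs y) : ℝ))⁻¹)))]
    simp only [mem_univ, if_true]
    rw [← mul_assoc, ← mul_assoc, mul_inv_cancel₀ (ne_of_gt (hnx_posR (xs y))), one_mul]
  set SN := {v : ℝ | ∃ Ph : Y → U → ℝ, (∀ y, IsPMF (Ph y)) ∧
      v = ∑ y, ∑ u, R u y * g (Ph y u)} with hSN
  have hSNbdd : BddAbove SN := by
    refine ⟨d * ∑ y, ∑ u, R u y, ?_⟩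
    rintro v ⟨Ph, hPh, rfl⟩
    rw [Finset.mul_sum]
    exact Finset.sum_le_sum fun y _ => gain_sum_le' hgle (fun u => hRnn u y) hd (hPh y)
  set N := maxGainFam g R with hN
  have hNge : (∑ y, P (xs y) y * g (((nx (xs y) : ℝ))⁻¹)) ≤ N := by
    apply le_csSup hSNbdd
    exact ⟨fun y => K (xs y), fun y => hKch (xs y),
      Finset.sum_congr rfl (fun y _ => (hval y).symm)⟩
  have hstep : ∀ y, m y * (d * k * k / n) ≤ P (xs y) y * g (((nx (xs y) : ℝ))⁻¹) := by
    intro y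
    have h1 : d * k * ((nx (xs y) : ℝ))⁻¹ ≤ g (((nx (xs y) : ℝ))⁻¹) := hg_nx (xs y)
    have hne := ne_of_gt (hnx_posR (xs y))
    have h2 : k / ((n : ℝ) * Q (xs y)) ≤ ((nx (xs y) : ℝ))⁻¹ := by
      rw [div_le_iff₀ (mul_pos hn0 (hPX (xs y)))]
      calc k = ((nx (xs y) : ℝ))⁻¹ * (k * (nx (xs y) : ℝ)) := by
            field_simp
        _ ≤ ((nx (xs y) : ℝ))⁻¹ * ((n : ℝ) * Q (xs y)) :=
            mul_le_mul_of_nonneg_left (hk_nx (xs y)) (inv_pos.mpr (hnx_posR _)).le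
    have hPxs : P (xs y) y = m y * Q (xs y) := by
      rw [hxs_eq y]
      field_simp [ne_of_gt (hPX (xs y))]
      exact (mul_div_cancel_right₀ _ (show Q (xs y) ≠ 0 from ne_of_gt (hPX (xs y)))).symm
    have hPnn' : (0:ℝ) ≤ P (xs y) y := hPnn _ _
    have c1 : P (xs y) y * (d * k * ((nx (xs y) : ℝ))⁻¹) ≤
        P (xs y) y * g (((nx (xs y) : ℝ))⁻¹) := mul_le_mul_of_nonneg_left h1 hPnn'
    have c2 : P (xs y) y * (d * k * (k / ((n : ℝ) * Q (xs y)))) ≤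
        P (xs y) y * (d * k * ((nx (xs y) : ℝ))⁻¹) :=
      mul_le_mul_of_nonneg_left
        (mul_le_mul_of_nonneg_left h2 (mul_pos hd hk0).le) hPnn'
    have c3 : P (xs y) y * (d * k * (k / ((n : ℝ) * Q (xs y)))) = m y * (d * k * k / n) := by
      rw [hPxs]
      have hQne := ne_of_gt (hPX (xs y))
      have hnne := ne_of_gt hn0
      field_simp
      ring
      exact mul_inv_cancel_right₀ (show Q (xs y) ≠ 0 from hQne) _
    linarith
  have hNge2 : M * (d * k * k / n) ≤ N := by
    calc M * (d * k * k / n) = ∑ y, m y * (d * k * k / n) := by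
          rw [hMdef, Finset.sum_mul]
      _ ≤ ∑ y, P (xs y) y * g (((nx (xs y) : ℝ))⁻¹) :=
          Finset.sum_le_sum (fun y _ => hstep y)
      _ ≤ N := hNge
  -- ratio
  have hratio : gRatio g P K = N / D := rfl
  have hfinal : k * k * M ≤ gRatio g P K := by
    rw [hratio]
    have h1 : M * (d * k * k / n) / D ≤ N / D :=
      (div_le_div_iff_of_pos_right hDpos).mpr hNge2
    have h2 : k * k * M ≤ M * (d * k * k / n) / D := by
      rw [le_div_iff₀ hDpos]
      calc k * k * M * D ≤ k * k * M * (d * (1 / n)) :=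
            mul_le_mul_of_nonneg_left hDle (by positivity)
        _ = M * (d * k * k / n) := by
            field_simp
    linarith
  have hkkM : 0 < k * k * M := by positivity
  have hlog1 : Real.log M - ε ≤ Real.log (k * k * M) := by
    rw [Real.log_mul (by positivity) (ne_of_gt hMpos),
      Real.log_mul (ne_of_gt hk0) (ne_of_gt hk0), hk, Real.log_exp]
    linarith
  refine ⟨U, inferInstance, K, hKch, ?_⟩
  calc Real.log M - ε ≤ Real.log (k * k * M) := hlog1
    _ ≤ Real.log (gRatio g P K) := Real.log_le_log hkkM hfinal

/-- For any concave gain function `g : [0,1] → [0,∞)` with `g(0) = 0` and a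
finite nonzero derivative at `0`, the maximal `g`-leakage equals maximal leakage
`log ∑_y max_x P_{Y|X}(y|x)`. -/
theorem stmt2 {X Y : Type} [Fintype X] [Fintype Y] [Nonempty X]
    (P : X → Y → ℝ) (hP : IsPMF (fun z : X × Y => P z.1 z.2))
    (hPX : ∀ x, 0 < ∑ y, P x y)
    (g : ℝ → ℝ)
    (hgnn : ∀ t ∈ Set.Icc (0:ℝ) 1, 0 ≤ g t)
    (hgconc : ConcaveOn ℝ (Set.Icc (0:ℝ) 1) g)
    (hg0 : g 0 = 0)
    (d : ℝ) (hgd : HasDerivWithinAt g d (Set.Icc (0:ℝ) 1) 0) (hd : 0 < d) :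
    IsLUB
      {r : ℝ | ∃ (U : Type) (iU : Fintype U) (K : X → U → ℝ),
        @IsChannel X U iU K ∧
        r = Real.log (@gRatio X Y U inferInstance inferInstance iU g P K)}
      (Real.log (∑ y, Finset.univ.sup' Finset.univ_nonempty
        (fun x => P x y / ∑ y', P x y'))) := by
  constructor
  · rintro r ⟨U, iU, K, hK, rfl⟩
    exact @aux_upper X Y U _ _ iU _ P hP hPX g hgnn hgconc hg0 d hgd hd K hK
  · intro b hb
    apply le_of_forall_pos_le_add
    intro ε hε
    obtain ⟨U, iU, K, hK, hge⟩ :=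
      aux_construct P hP hPX g hgnn hgconc hg0 d hgd hd ε hε
    have hmem : Real.log (@gRatio X Y U inferInstance inferInstance iU g P K) ∈
        {r : ℝ | ∃ (U : Type) (iU : Fintype U) (K : X → U → ℝ),
          @IsChannel X U iU K ∧
          r = Real.log (@gRatio X Y U inferInstance inferInstance iU g P K)} :=
      ⟨U, iU, K, hK, rfl⟩
    have := hb hmem
    linarith
end

section
/- Let P and Q be pmfs on a finite alphabet 𝒳 with Q(x)>0 for all x. Let g:[0,1]→[0,∞) satisfy: g(0)=0, g is continuous at 0, and 0 < sup_{p∈[0,1]} g(p) < ∞. Then sup over finite alphabets 𝒰 and channels P_{U|X} from 𝒳 to 𝒰 of log[ G_g(P_U) / G_g(Q_U) ] = D_∞(P‖Q), where P_U(u)=Σ_x P(x)P_{U|X}(u|x) and Q_U(u)=Σ_x Q(x)P_{U|X}(u|x). -/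
open Finset

/-- The Rényi divergence of order `∞`: `max_{x : P(x) > 0} log (P(x)/Q(x))`. -/
noncomputable def Dinf {X : Type*} [Fintype X] (P Q : X → ℝ) : ℝ :=
  sSup {v : ℝ | ∃ x, 0 < P x ∧ v = Real.log (P x / Q x)}

section Aux

variable {U : Type*} [Fintype U]

lemma IsPMF.le_one' {p : U → ℝ} (hp : IsPMF p) (u : U) : p u ≤ 1 := by
  rw [← hp.2]
  exact Finset.single_le_sum (fun i _ => hp.1 i) (Finset.mem_univ u)

lemma IsPMF.mem_Icc {p : U → ℝ} (hp : IsPMF p) (u : U) : p u ∈ Set.Icc (0:ℝ) 1 :=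
  ⟨hp.1 u, hp.le_one' u⟩

lemma pointPMF [DecidableEq U] (u0 : U) : IsPMF (fun u => if u = u0 then (1:ℝ) else 0) := by
  constructor
  · intro a; dsimp only; split <;> norm_num
  · simp

lemma gainSet_nonempty [Nonempty U] (g : ℝ → ℝ) (R : U → ℝ) :
    {v : ℝ | ∃ Ph : U → ℝ, IsPMF Ph ∧ v = ∑ u, R u * g (Ph u)}.Nonempty := by
  classical
  obtain ⟨u0⟩ := ‹Nonempty U›
  exact ⟨_, _, pointPMF u0, rfl⟩

lemma gainSet_bddAbove {g : ℝ → ℝ} {M : ℝ} (hM : ∀ t ∈ Set.Icc (0:ℝ) 1, g t ≤ M)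
    {R : U → ℝ} (hR : IsPMF R) :
    BddAbove {v : ℝ | ∃ Ph : U → ℝ, IsPMF Ph ∧ v = ∑ u, R u * g (Ph u)} := by
  refine ⟨M, ?_⟩
  rintro v ⟨Ph, hPh, rfl⟩
  calc ∑ u, R u * g (Ph u) ≤ ∑ u, R u * M :=
        Finset.sum_le_sum fun u _ => mul_le_mul_of_nonneg_left (hM _ (hPh.mem_Icc u)) (hR.1 u)
    _ = M := by rw [← Finset.sum_mul, hR.2, one_mul]

lemma le_maxGain {g : ℝ → ℝ} {M : ℝ} (hM : ∀ t ∈ Set.Icc (0:ℝ) 1, g t ≤ M)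
    {R : U → ℝ} (hR : IsPMF R) {Ph : U → ℝ} (hPh : IsPMF Ph) :
    ∑ u, R u * g (Ph u) ≤ maxGain g R :=
  le_csSup (gainSet_bddAbove hM hR) ⟨Ph, hPh, rfl⟩

lemma maxGain_nonneg [Nonempty U] {g : ℝ → ℝ} {M : ℝ}
    (hgnn : ∀ t ∈ Set.Icc (0:ℝ) 1, 0 ≤ g t)
    (hM : ∀ t ∈ Set.Icc (0:ℝ) 1, g t ≤ M)
    {R : U → ℝ} (hR : IsPMF R) : 0 ≤ maxGain g R := by
  classical
  obtain ⟨u0⟩ := ‹Nonempty U›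
  refine le_trans ?_ (le_maxGain hM hR (pointPMF u0))
  exact Finset.sum_nonneg fun u _ =>
    mul_nonneg (hR.1 u) (hgnn _ ((pointPMF u0).mem_Icc u))

lemma push_isPMF {X : Type*} [Fintype X] {P : X → ℝ} {K : X → U → ℝ}
    (hP : IsPMF P) (hK : IsChannel K) : IsPMF (push P K) := by
  constructor
  · intro u; exact Finset.sum_nonneg fun x _ => mul_nonneg (hP.1 x) ((hK x).1 u)
  · rw [show ∑ u, push P K u = ∑ u, ∑ x, P x * K x u from rfl, Finset.sum_comm]
    rw [Finset.sum_congr rfl fun x _ => by rw [← Finset.mul_sum, (hK x).2, mul_one]]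
    exact hP.2

end Aux


set_option maxHeartbeats 2000000 in
/-- Variational characterization of `D_∞`: for any gain function `g` with
`g(0) = 0`, `g` continuous at `0`, and `0 < sup_{p ∈ [0,1]} g(p) < ∞`,
`sup_{U, P_{U|X}} log (G_g(P_U) / G_g(Q_U)) = D_∞(P‖Q)`. -/
theorem stmt3 {X : Type} [Fintype X]
    (P Q : X → ℝ) (hP : IsPMF P) (hQ : IsPMF Q) (hQpos : ∀ x, 0 < Q x)
    (g : ℝ → ℝ)
    (hgnn : ∀ t ∈ Set.Icc (0:ℝ) 1, 0 ≤ g t)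
    (hg0 : g 0 = 0)
    (hgc : ContinuousWithinAt g (Set.Icc (0:ℝ) 1) 0)
    (hgb : BddAbove (g '' Set.Icc (0:ℝ) 1))
    (hgpos : 0 < sSup (g '' Set.Icc (0:ℝ) 1)) :
    IsLUB
      {r : ℝ | ∃ (U : Type) (iU : Fintype U) (K : X → U → ℝ),
        @IsChannel X U iU K ∧
        r = Real.log (@maxGain U iU g (push P K) / @maxGain U iU g (push Q K))}
      (Dinf P Q) := by
  classical
  set M := sSup (g '' Set.Icc (0:ℝ) 1) with hMdef
  have hM0 : 0 < M := hgpos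
  have hgM : ∀ t ∈ Set.Icc (0:ℝ) 1, g t ≤ M := fun t ht => le_csSup hgb ⟨t, ht, rfl⟩
  have hPx : ∃ x, 0 < P x := by
    by_contra h
    push_neg at h
    have hz : ∀ x, P x = 0 := fun x => le_antisymm (h x) (hP.1 x)
    have h1 := hP.2
    simp [hz] at h1
  obtain ⟨xp, hxp⟩ := hPx
  set DS := {v : ℝ | ∃ x, 0 < P x ∧ v = Real.log (P x / Q x)} with hDSdef
  have hDinf : Dinf P Q = sSup DS := rfl
  have hDSfin : DS.Finite := Set.Finite.subset
    (Set.finite_range (fun x => Real.log (P x / Q x))) (by rintro v ⟨x, _, rfl⟩; exact ⟨x, rfl⟩)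
  have hDSne : DS.Nonempty := ⟨_, xp, hxp, rfl⟩
  have hDub : ∀ x, 0 < P x → Real.log (P x / Q x) ≤ Dinf P Q := by
    intro x hx
    rw [hDinf]
    exact le_csSup hDSfin.bddAbove ⟨x, hx, rfl⟩
  have hD0 : 0 ≤ Dinf P Q := by
    have hx : ∃ x, 0 < P x ∧ Q x ≤ P x := by
      by_contra h
      push_neg at h
      have hle : ∀ x ∈ Finset.univ, P x ≤ Q x := by
        intro x _
        rcases lt_or_eq_of_le (hP.1 x) with hx' | hx'
        · exact le_of_lt (h x hx')
        · rw [← hx']; exact le_of_lt (hQpos x)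
      have hlt : (1:ℝ) < 1 := by
        calc (1:ℝ) = ∑ x, P x := hP.2.symm
          _ < ∑ x, Q x := Finset.sum_lt_sum hle ⟨xp, Finset.mem_univ xp, h xp hxp⟩
          _ = 1 := hQ.2
      exact absurd hlt (lt_irrefl 1)
    obtain ⟨x, hx1, hx2⟩ := hx
    refine le_trans (Real.log_nonneg ?_) (hDub x hx1)
    rw [le_div_iff₀ (hQpos x)]; linarith
  have hdom : ∀ x, P x ≤ Real.exp (Dinf P Q) * Q x := by
    intro x
    rcases lt_or_eq_of_le (hP.1 x) with hx | hx
    · have h1 : P x / Q x ≤ Real.exp (Dinf P Q) := by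
        rw [← Real.exp_log (div_pos hx (hQpos x))]
        exact Real.exp_le_exp.mpr (hDub x hx)
      calc P x = (P x / Q x) * Q x := (div_mul_cancel₀ _ (ne_of_gt (hQpos x))).symm
        _ ≤ Real.exp (Dinf P Q) * Q x := mul_le_mul_of_nonneg_right h1 (hQpos x).le
    · rw [← hx]; exact mul_nonneg (Real.exp_nonneg _) (hQpos x).le
  constructor
  · -- D is an upper bound
    rintro r ⟨U, iU, K, hK, rfl⟩
    have hUne : Nonempty U := by
      by_contra h
      rw [not_nonempty_iff] at h
      have h1 := (hK xp).2
      rw [Finset.univ_eq_empty, Finset.sum_empty] at h1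
      exact zero_ne_one h1
    have hRP := push_isPMF hP hK
    have hRQ := push_isPMF hQ hK
    have hAB : maxGain g (push P K) ≤ Real.exp (Dinf P Q) * maxGain g (push Q K) := by
      refine csSup_le (gainSet_nonempty g _) ?_
      rintro v ⟨Ph, hPh, rfl⟩
      have h1 : ∀ u, push P K u * g (Ph u) ≤ Real.exp (Dinf P Q) * (push Q K u * g (Ph u)) := by
        intro u
        rw [← mul_assoc]
        refine mul_le_mul_of_nonneg_right ?_ (hgnn _ (hPh.mem_Icc u))
        calc push P K u = ∑ x, P x * K x u := rfl
          _ ≤ ∑ x, (Real.exp (Dinf P Q) * Q x) * K x u :=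
              Finset.sum_le_sum fun x _ => mul_le_mul_of_nonneg_right (hdom x) ((hK x).1 u)
          _ = Real.exp (Dinf P Q) * push Q K u := by
              rw [show push Q K u = ∑ x, Q x * K x u from rfl, Finset.mul_sum]
              exact Finset.sum_congr rfl fun x _ => by ring
      calc ∑ u, push P K u * g (Ph u)
          ≤ ∑ u, Real.exp (Dinf P Q) * (push Q K u * g (Ph u)) :=
            Finset.sum_le_sum fun u _ => h1 u
        _ = Real.exp (Dinf P Q) * ∑ u, push Q K u * g (Ph u) := by rw [Finset.mul_sum]
        _ ≤ Real.exp (Dinf P Q) * maxGain g (push Q K) :=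
            mul_le_mul_of_nonneg_left (le_maxGain hgM hRQ hPh) (Real.exp_nonneg _)
    have hA0 : 0 ≤ maxGain g (push P K) := maxGain_nonneg hgnn hgM hRP
    rcases eq_or_lt_of_le hA0 with hA | hA
    · rw [← hA, zero_div, Real.log_zero]; exact hD0
    · have hB : 0 < maxGain g (push Q K) := by
        by_contra hB
        push_neg at hB
        nlinarith [Real.exp_pos (Dinf P Q)]
      rw [Real.log_le_iff_le_exp (div_pos hA hB), div_le_iff₀ hB]
      linarith [hAB]
  · -- D is the least upper bound
    intro b hb
    refine le_of_forall_pos_le_add ?_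
    intro ε hε
    have hmem : Dinf P Q ∈ DS := by rw [hDinf]; exact hDSne.csSup_mem hDSfin
    obtain ⟨x0, hx0, hDeq⟩ := hmem
    have hq0 : 0 < Q x0 := hQpos x0
    set E := Real.exp (-ε) with hEdef
    have hE0 : 0 < E := Real.exp_pos _
    have hE1 : E < 1 := by
      rw [hEdef, ← Real.exp_zero]
      exact Real.exp_lt_exp.mpr (by linarith)
    set η := (1 - E)/4 with hηdef
    have hη0 : 0 < η := by rw [hηdef]; linarith
    have hη1 : η < 1 := by rw [hηdef]; linarith
    have hkey : E * (1 + 2*η) < 1 - η := by rw [hηdef]; nlinarith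
    have hex : ∃ t ∈ Set.Icc (0:ℝ) 1, M * (1-η) < g t := by
      have h1 : M * (1-η) < M := by nlinarith
      have hne : (g '' Set.Icc (0:ℝ) 1).Nonempty := ⟨g 0, 0, by norm_num, rfl⟩
      obtain ⟨v, hv, hv2⟩ := exists_lt_of_lt_csSup hne h1
      obtain ⟨t, ht, rfl⟩ := hv
      exact ⟨t, ht, hv2⟩
    obtain ⟨t0, ht0, hgt0⟩ := hex
    have hgt0' : 0 < g t0 := lt_of_le_of_lt (by nlinarith) hgt0
    set c := Q x0 * M * η with hcdef
    have hc0 : 0 < c := by positivity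
    have hδ : ∃ δ > 0, ∀ t ∈ Set.Icc (0:ℝ) 1, t < δ → g t < c := by
      have h1 : Set.Iio c ∈ nhds (g 0) := by rw [hg0]; exact Iio_mem_nhds hc0
      have h2 := hgc h1
      rw [Filter.mem_map, Metric.mem_nhdsWithin_iff] at h2
      obtain ⟨δ, hδ0, hδ2⟩ := h2
      refine ⟨δ, hδ0, fun t ht h => ?_⟩
      have hball : t ∈ Metric.ball (0:ℝ) δ := by
        rw [Metric.mem_ball, Real.dist_eq, sub_zero, abs_of_nonneg ht.1]; exact h
      exact hδ2 ⟨hball, ht⟩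
    obtain ⟨δ, hδ0, hsmall⟩ := hδ
    obtain ⟨n, hn⟩ := exists_nat_gt (max 0 (M / (δ * c)))
    have hnR : 0 < (n:ℝ) := lt_of_le_of_lt (le_max_left 0 _) hn
    have hn0 : 0 < n := by exact_mod_cast hnR
    have hnd : M / (δ * c) < n := lt_of_le_of_lt (le_max_right _ _) hn
    -- the channel
    set K : X → Option (Fin n) → ℝ := fun x u =>
      if x = x0 then (if u = none then 1 else 0) else (if u = none then 0 else 1/n) with hKdef
    have hK : IsChannel K := by
      intro x
      by_cases hx : x = x0
      · constructor
        · intro u; simp only [hKdef, hx, if_pos rfl]; split <;> norm_num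
        · simp [hKdef, hx]
      · constructor
        · intro u; simp only [hKdef, hx, if_neg hx]; split
          · norm_num
          · positivity
        · rw [show (∑ u, K x u) = ∑ u : Option (Fin n),
              (if u = none then 0 else 1/(n:ℝ)) from Finset.sum_congr rfl (by simp [hKdef, hx])]
          rw [Fintype.sum_option]
          simp
          field_simp
    have hnone : ∀ R : X → ℝ, push R K none = R x0 := by
      intro R
      rw [show push R K none = ∑ x, R x * K x none from rfl]
      rw [Finset.sum_congr rfl (fun x _ => show R x * K x none =
        (if x = x0 then R x else 0) from by by_cases hx : x = x0 <;> simp [hKdef, hx])]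
      simp
    have hsome : ∀ (R : X → ℝ), (∑ x, R x = 1) → ∀ i : Fin n,
        push R K (some i) = (1 - R x0)/n := by
      intro R hR i
      rw [show push R K (some i) = ∑ x, R x * K x (some i) from rfl]
      rw [← Finset.add_sum_erase _ _ (Finset.mem_univ x0)]
      have h1 : R x0 * K x0 (some i) = 0 := by simp [hKdef]
      have h2 : ∀ x ∈ Finset.univ.erase x0, R x * K x (some i) = R x * (1/n) := by
        intro x hx
        simp [hKdef, (Finset.mem_erase.mp hx).1]
      rw [h1, zero_add, Finset.sum_congr rfl h2, ← Finset.sum_mul]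
      have h3 : ∑ x ∈ Finset.univ.erase x0, R x = 1 - R x0 := by
        have h4 := Finset.add_sum_erase Finset.univ R (Finset.mem_univ x0)
        rw [hR] at h4
        linarith
      rw [h3]; ring
    have hRP := push_isPMF hP hK
    have hRQ := push_isPMF hQ hK
    -- the estimator achieving g t0
    set i0 : Fin n := ⟨0, hn0⟩ with hi0def
    set Ph0 : Option (Fin n) → ℝ := fun u =>
      if u = none then t0 else if u = some i0 then 1 - t0 else 0 with hPh0def
    have hPh0 : IsPMF Ph0 := by
      constructor
      · intro u
        simp only [hPh0def]
        split
        · exact ht0.1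
        · split
          · linarith [ht0.2]
          · exact le_refl 0
      · rw [Fintype.sum_option]
        have h1 : Ph0 none = t0 := by simp [hPh0def]
        have h2 : ∀ i : Fin n, Ph0 (some i) = if i = i0 then 1 - t0 else 0 := by
          intro i; simp [hPh0def]
        rw [h1, Finset.sum_congr rfl fun i _ => h2 i, Finset.sum_ite_eq' Finset.univ i0]
        simp
    have hAlb : P x0 * g t0 ≤ maxGain g (push P K) := by
      refine le_trans ?_ (le_maxGain hgM hRP hPh0)
      rw [Fintype.sum_option]
      have h2 : 0 ≤ ∑ i, push P K (some i) * g (Ph0 (some i)) :=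
        Finset.sum_nonneg fun i _ => mul_nonneg (hRP.1 _) (hgnn _ (hPh0.mem_Icc _))
      have h3 : push P K none * g (Ph0 none) = P x0 * g t0 := by
        rw [hnone P]; simp [hPh0def]
      linarith
    have hBlb : Q x0 * g t0 ≤ maxGain g (push Q K) := by
      refine le_trans ?_ (le_maxGain hgM hRQ hPh0)
      rw [Fintype.sum_option]
      have h2 : 0 ≤ ∑ i, push Q K (some i) * g (Ph0 (some i)) :=
        Finset.sum_nonneg fun i _ => mul_nonneg (hRQ.1 _) (hgnn _ (hPh0.mem_Icc _))
      have h3 : push Q K none * g (Ph0 none) = Q x0 * g t0 := by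
        rw [hnone Q]; simp [hPh0def]
      linarith
    have hBpos : 0 < maxGain g (push Q K) :=
      lt_of_lt_of_le (by positivity) hBlb
    -- upper bound on B
    have hBub : maxGain g (push Q K) ≤ Q x0 * M + c + c := by
      refine csSup_le (gainSet_nonempty g _) ?_
      rintro v ⟨Ph, hPh, rfl⟩
      rw [Fintype.sum_option]
      have h1 : push Q K none * g (Ph none) ≤ Q x0 * M := by
        rw [hnone Q]
        exact mul_le_mul_of_nonneg_left (hgM _ (hPh.mem_Icc none)) hq0.le
      have hsum : ∑ i : Fin n, g (Ph (some i)) ≤ M/δ + n * c := by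
        classical
        set T := Finset.univ.filter (fun i : Fin n => δ ≤ Ph (some i)) with hTdef
        have hsplit : ∑ i : Fin n, g (Ph (some i)) =
            (∑ i ∈ T, g (Ph (some i))) + ∑ i ∈ Finset.univ.filter (fun i => ¬ δ ≤ Ph (some i)), g (Ph (some i)) :=
          (Finset.sum_filter_add_sum_filter_not Finset.univ _ _).symm
        have hT1 : ∑ i ∈ T, g (Ph (some i)) ≤ (T.card : ℝ) * M := by
          calc ∑ i ∈ T, g (Ph (some i)) ≤ ∑ _i ∈ T, M :=
                Finset.sum_le_sum fun i _ => hgM _ (hPh.mem_Icc _)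
            _ = (T.card : ℝ) * M := by rw [Finset.sum_const, nsmul_eq_mul]
        have hsum1 : ∑ i : Fin n, Ph (some i) ≤ 1 := by
          have h4 := hPh.2
          rw [Fintype.sum_option] at h4
          linarith [hPh.1 none]
        have hTcard : (T.card : ℝ) * δ ≤ 1 := by
          calc (T.card : ℝ) * δ = ∑ _i ∈ T, δ := by rw [Finset.sum_const, nsmul_eq_mul]
            _ ≤ ∑ i ∈ T, Ph (some i) :=
                Finset.sum_le_sum fun i hi => (Finset.mem_filter.mp hi).2
            _ ≤ ∑ i : Fin n, Ph (some i) :=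
                Finset.sum_le_sum_of_subset_of_nonneg (Finset.filter_subset _ _)
                  (fun i _ _ => hPh.1 _)
            _ ≤ 1 := hsum1
        have hT2 : (T.card : ℝ) * M ≤ M / δ := by
          rw [le_div_iff₀ hδ0]
          calc (T.card : ℝ) * M * δ = ((T.card : ℝ) * δ) * M := by ring
            _ ≤ 1 * M := mul_le_mul_of_nonneg_right hTcard hM0.le
            _ = M := one_mul M
        have hT3 : ∑ i ∈ Finset.univ.filter (fun i => ¬ δ ≤ Ph (some i)), g (Ph (some i))
            ≤ (n : ℝ) * c := by
          calc ∑ i ∈ Finset.univ.filter (fun i => ¬ δ ≤ Ph (some i)), g (Ph (some i))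
              ≤ ∑ _i ∈ Finset.univ.filter (fun i : Fin n => ¬ δ ≤ Ph (some i)), c :=
                Finset.sum_le_sum fun i hi =>
                  (hsmall _ (hPh.mem_Icc _) (lt_of_not_ge (Finset.mem_filter.mp hi).2)).le
            _ = ((Finset.univ.filter (fun i : Fin n => ¬ δ ≤ Ph (some i))).card : ℝ) * c := by
                rw [Finset.sum_const, nsmul_eq_mul]
            _ ≤ (n : ℝ) * c := by
                refine mul_le_mul_of_nonneg_right ?_ hc0.le
                have := Finset.card_filter_le Finset.univ (fun i : Fin n => ¬ δ ≤ Ph (some i))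
                have hcard : (Finset.univ : Finset (Fin n)).card = n := by simp
                exact_mod_cast hcard ▸ this
        linarith
      have h2 : ∑ i, push Q K (some i) * g (Ph (some i)) ≤ c + c := by
        have hle : ∀ i : Fin n, push Q K (some i) * g (Ph (some i))
            ≤ (1/(n:ℝ)) * g (Ph (some i)) := by
          intro i
          rw [hsome Q hQ.2 i]
          refine mul_le_mul_of_nonneg_right ?_ (hgnn _ (hPh.mem_Icc _))
          rw [div_le_div_iff₀ hnR hnR]
          nlinarith [hq0]
        have hMnd : M / ((n:ℝ) * δ) ≤ c := by
          rw [div_le_iff₀ (by positivity)]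
          have h5 := (div_lt_iff₀ (by positivity : (0:ℝ) < δ * c)).mp hnd
          nlinarith
        calc ∑ i, push Q K (some i) * g (Ph (some i))
            ≤ ∑ i, (1/(n:ℝ)) * g (Ph (some i)) := Finset.sum_le_sum fun i _ => hle i
          _ = (1/(n:ℝ)) * ∑ i, g (Ph (some i)) := by rw [Finset.mul_sum]
          _ ≤ (1/(n:ℝ)) * (M/δ + n * c) :=
              mul_le_mul_of_nonneg_left hsum (by positivity)
          _ = M / ((n:ℝ) * δ) + c := by field_simp
          _ ≤ c + c := by linarith
      linarith
    -- final assembly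
    have hABq : (P x0 / Q x0) * E < maxGain g (push P K) / maxGain g (push Q K) := by
      rw [lt_div_iff₀ hBpos]
      calc (P x0 / Q x0) * E * maxGain g (push Q K)
          ≤ (P x0 / Q x0) * E * (Q x0 * M + c + c) := by
            refine mul_le_mul_of_nonneg_left hBub (by positivity)
        _ = P x0 * M * (E * (1 + 2*η)) := by
            rw [hcdef]; field_simp; ring
        _ < P x0 * M * (1 - η) := by
            refine mul_lt_mul_of_pos_left hkey (by positivity)
        _ = P x0 * (M * (1 - η)) := by ring
        _ < P x0 * g t0 := by
            exact mul_lt_mul_of_pos_left hgt0 hx0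
        _ ≤ maxGain g (push P K) := hAlb
    have hlt : Dinf P Q - ε < Real.log (maxGain g (push P K) / maxGain g (push Q K)) := by
      have h6 : Real.log ((P x0 / Q x0) * E) <
          Real.log (maxGain g (push P K) / maxGain g (push Q K)) :=
        Real.log_lt_log (by positivity) hABq
      have h7 : Real.log ((P x0 / Q x0) * E) = Dinf P Q - ε := by
        rw [Real.log_mul (ne_of_gt (div_pos hx0 hq0)) (ne_of_gt hE0), hEdef, Real.log_exp, hDeq]
        ring
      linarith
    have hmemS : Real.log (maxGain g (push P K) / maxGain g (push Q K)) ∈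
        {r : ℝ | ∃ (U : Type) (iU : Fintype U) (K : X → U → ℝ),
          @IsChannel X U iU K ∧
          r = Real.log (@maxGain U iU g (push P K) / @maxGain U iU g (push Q K))} :=
      ⟨Option (Fin n), inferInstance, K, hK, rfl⟩
    have h8 := hb hmemS
    linarith
end

section
/- Let P and Q be pmfs on a finite alphabet 𝒳 with Q(x)>0 for all x, and let α∈(1,∞). Then sup over finite alphabets 𝒰 and channels P_{U|X} from 𝒳 to 𝒰 of log[ (Σ_u P_U(u)^α)^{1/α} / (Σ_u Q_U(u)^α)^{1/α} ] = D_∞(P‖Q), where P_U(u)=Σ_x P(x)P_{U|X}(u|x) and Q_U(u)=Σ_x Q(x)P_{U|X}(u|x). -/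
open Finset

/-- The `α`-norm-type quantity `(∑_u R(u)^α)^{1/α}`. -/
noncomputable def alphaNorm {U : Type*} [Fintype U] (α : ℝ) (R : U → ℝ) : ℝ :=
  (∑ u, R u ^ α) ^ (1 / α)

section Aux

variable {X : Type} [Fintype X]

lemma push_nonneg {U : Type} [Fintype U] {P : X → ℝ} {K : X → U → ℝ}
    (hP : ∀ x, 0 ≤ P x) (hK : IsChannel K) (u : U) : 0 ≤ push P K u :=
  Finset.sum_nonneg fun x _ => mul_nonneg (hP x) ((hK x).1 u)

lemma push_sum_one {U : Type} [Fintype U] {P : X → ℝ} {K : X → U → ℝ}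
    (hP : IsPMF P) (hK : IsChannel K) : ∑ u, push P K u = 1 := by
  unfold push
  rw [Finset.sum_comm]
  calc ∑ x, ∑ u, P x * K x u = ∑ x, P x := by
        refine Finset.sum_congr rfl fun x _ => ?_
        rw [← Finset.mul_sum, (hK x).2, mul_one]
    _ = 1 := hP.2

/-- The splitting channel: `xs` goes deterministically to `(xs, 0)`; any other `x`
goes uniformly to `(x, i)`, `i : Fin (m+1)`. -/
noncomputable def Kc [DecidableEq X] (m : ℕ) (xs : X) : X → X × Fin (m+1) → ℝ :=
  fun x p => if p.1 = x then (if x = xs then (if p.2 = 0 then (1:ℝ) else 0)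
    else ((m:ℝ)+1)⁻¹) else 0

lemma Kc_channel [DecidableEq X] (m : ℕ) (xs : X) : IsChannel (Kc (X := X) m xs) := by
  intro x
  constructor
  · intro p
    unfold Kc
    split_ifs <;> positivity
  · rw [Fintype.sum_prod_type]
    have h1 : ∀ y : X, ∑ i : Fin (m+1), Kc m xs x (y, i) = if y = x then 1 else 0 := by
      intro y
      by_cases hy : y = x
      · simp only [Kc, if_pos hy, if_pos hy]
        by_cases hx : x = xs
        · simp [hx]
        · simp only [if_neg hx]
          rw [Finset.sum_const, Finset.card_univ, Fintype.card_fin, nsmul_eq_mul]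
          push_cast
          rw [mul_inv_cancel₀ (by positivity)]
      · simp [Kc, hy]
    rw [Finset.sum_congr rfl fun y _ => h1 y]
    simp

lemma push_Kc [DecidableEq X] (m : ℕ) (xs : X) (R : X → ℝ) (y : X) (i : Fin (m+1)) :
    push R (Kc m xs) (y, i)
      = R y * (if y = xs then (if i = 0 then (1:ℝ) else 0) else ((m:ℝ)+1)⁻¹) := by
  unfold push Kc
  simp only [mul_ite, mul_zero, mul_one]
  rw [Finset.sum_ite_eq Finset.univ y
    (fun x => if x = xs then (if i = 0 then R x else 0) else R x * ((m:ℝ)+1)⁻¹)]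
  simp only [Finset.mem_univ, if_true]

lemma sum_rpow_Kc [DecidableEq X] (m : ℕ) (xs : X) (R : X → ℝ) (hR : ∀ x, 0 ≤ R x)
    {α : ℝ} (hα : 0 < α) :
    ∑ u : X × Fin (m+1), push R (Kc m xs) u ^ α
      = R xs ^ α + (∑ y ∈ Finset.univ.erase xs, R y ^ α) * ((m:ℝ)+1) ^ (1-α) := by
  have hs : (0:ℝ) < (m:ℝ)+1 := by positivity
  rw [Fintype.sum_prod_type]
  have hinner : ∀ y : X, ∑ i : Fin (m+1), push R (Kc m xs) (y, i) ^ α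
      = R y ^ α * (if y = xs then 1 else ((m:ℝ)+1) ^ (1-α)) := by
    intro y
    by_cases hy : y = xs
    · have h0 : ∀ i : Fin (m+1), push R (Kc m xs) (y, i) = if i = 0 then R y else 0 := by
        intro i
        rw [push_Kc, if_pos hy]
        split_ifs <;> ring
      calc ∑ i : Fin (m+1), push R (Kc m xs) (y, i) ^ α
          = ∑ i : Fin (m+1), (if i = 0 then R y else 0) ^ α :=
            Finset.sum_congr rfl fun i _ => by rw [h0]
        _ = R y ^ α * (if y = xs then 1 else ((m:ℝ)+1) ^ (1-α)) := by
            rw [Finset.sum_eq_single (0 : Fin (m+1))]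
            · rw [if_pos rfl, if_pos hy, mul_one]
            · intro i _ hi
              rw [if_neg hi, Real.zero_rpow (ne_of_gt hα)]
            · simp
    · have key : ((m:ℝ)+1) ^ (1-α) = ((m:ℝ)+1) * (((m:ℝ)+1) ^ α)⁻¹ := by
        rw [Real.rpow_sub hs, Real.rpow_one, div_eq_mul_inv]
      simp only [push_Kc, if_neg hy]
      rw [Finset.sum_const, Finset.card_univ, Fintype.card_fin, nsmul_eq_mul,
        Real.mul_rpow (hR y) (by positivity), Real.inv_rpow (le_of_lt hs), key]
      push_cast
      ring
  rw [Finset.sum_congr rfl fun y _ => hinner y,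
    ← Finset.add_sum_erase Finset.univ _ (Finset.mem_univ xs)]
  rw [if_pos rfl, mul_one]
  congr 1
  rw [Finset.sum_mul]
  refine Finset.sum_congr rfl fun y hy => ?_
  rw [if_neg (Finset.ne_of_mem_erase hy)]

end Aux

/-- For `α ∈ (1,∞)`,
`sup_{U, P_{U|X}} log ((∑_u P_U(u)^α)^{1/α} / (∑_u Q_U(u)^α)^{1/α}) = D_∞(P‖Q)`. -/
theorem stmt4 {X : Type} [Fintype X]
    (P Q : X → ℝ) (hP : IsPMF P) (hQ : IsPMF Q) (hQpos : ∀ x, 0 < Q x)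
    (α : ℝ) (hα : 1 < α) :
    IsLUB
      {r : ℝ | ∃ (U : Type) (iU : Fintype U) (K : X → U → ℝ),
        @IsChannel X U iU K ∧
        r = Real.log (@alphaNorm U iU α (push P K) / @alphaNorm U iU α (push Q K))}
      (Dinf P Q) := by
  classical
  have hα0 : (0:ℝ) < α := lt_trans one_pos hα
  have hαne : α ≠ 0 := ne_of_gt hα0
  have hXne : (Finset.univ : Finset X).Nonempty := by
    rcases (Finset.univ : Finset X).eq_empty_or_nonempty with h | h
    · exfalso
      have h2 := hP.2
      rw [h, Finset.sum_empty] at h2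
      exact one_ne_zero h2.symm
    · exact h
  obtain ⟨xs, -, hxs⟩ := Finset.exists_max_image Finset.univ (fun x => P x / Q x) hXne
  have hex : ∃ x, Q x ≤ P x := by
    by_contra h
    push_neg at h
    have h2 := Finset.sum_lt_sum_of_nonempty hXne (fun x _ => h x)
    rw [hP.2, hQ.2] at h2
    exact lt_irrefl 1 h2
  obtain ⟨x1, hx1⟩ := hex
  have hratio1 : (1:ℝ) ≤ P xs / Q xs := by
    have h1 : (1:ℝ) ≤ P x1 / Q x1 := (one_le_div (hQpos x1)).2 hx1
    exact h1.trans (hxs x1 (Finset.mem_univ x1))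
  have hrpos : 0 < P xs / Q xs := lt_of_lt_of_le one_pos hratio1
  have hPxs : 0 < P xs := by
    rcases div_pos_iff.mp hrpos with ⟨h, -⟩ | ⟨-, h⟩
    · exact h
    · linarith [hQpos xs]
  have hDeq : Dinf P Q = Real.log (P xs / Q xs) := by
    unfold Dinf
    apply IsGreatest.csSup_eq
    constructor
    · exact ⟨xs, hPxs, rfl⟩
    · rintro v ⟨x, hx, rfl⟩
      exact Real.log_le_log (div_pos hx (hQpos x)) (hxs x (Finset.mem_univ x))
  rw [hDeq]
  constructor
  · -- upper bound
    rintro v ⟨U, iU, K, hK, rfl⟩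
    letI := iU
    have hPU0 : ∀ u, 0 ≤ push P K u := push_nonneg hP.1 hK
    have hQU0 : ∀ u, 0 ≤ push Q K u := push_nonneg hQ.1 hK
    have hSA : 0 < ∑ u, (push P K u) ^ α := by
      obtain ⟨u0, -, hu0⟩ : ∃ u ∈ Finset.univ, 0 < push P K u := by
        by_contra h
        push_neg at h
        have h2 : ∑ u, push P K u ≤ 0 := Finset.sum_nonpos (fun u hu => h u hu)
        rw [push_sum_one hP hK] at h2
        linarith
      exact Finset.sum_pos' (fun u _ => Real.rpow_nonneg (hPU0 u) α)
        ⟨u0, Finset.mem_univ u0, Real.rpow_pos_of_pos hu0 α⟩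
    have hSB : 0 < ∑ u, (push Q K u) ^ α := by
      obtain ⟨u0, -, hu0⟩ : ∃ u ∈ Finset.univ, 0 < push Q K u := by
        by_contra h
        push_neg at h
        have h2 : ∑ u, push Q K u ≤ 0 := Finset.sum_nonpos (fun u hu => h u hu)
        rw [push_sum_one hQ hK] at h2
        linarith
      exact Finset.sum_pos' (fun u _ => Real.rpow_nonneg (hQU0 u) α)
        ⟨u0, Finset.mem_univ u0, Real.rpow_pos_of_pos hu0 α⟩
    have hApos : 0 < alphaNorm α (push P K) := Real.rpow_pos_of_pos hSA _
    have hBpos : 0 < alphaNorm α (push Q K) := Real.rpow_pos_of_pos hSB _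
    have hle : ∀ u, push P K u ≤ (P xs / Q xs) * push Q K u := by
      intro u
      unfold push
      rw [Finset.mul_sum]
      refine Finset.sum_le_sum fun x _ => ?_
      have h1 : P x ≤ (P xs / Q xs) * Q x := by
        have h2 := hxs x (Finset.mem_univ x)
        rwa [div_le_iff₀ (hQpos x)] at h2
      calc P x * K x u ≤ ((P xs / Q xs) * Q x) * K x u :=
            mul_le_mul_of_nonneg_right h1 ((hK x).1 u)
        _ = (P xs / Q xs) * (Q x * K x u) := by ring
    have hsum_le : ∑ u, (push P K u) ^ α ≤ (P xs / Q xs) ^ α * ∑ u, (push Q K u) ^ α := by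
      rw [Finset.mul_sum]
      refine Finset.sum_le_sum fun u _ => ?_
      calc (push P K u) ^ α ≤ ((P xs / Q xs) * push Q K u) ^ α :=
            Real.rpow_le_rpow (hPU0 u) (hle u) (le_of_lt hα0)
        _ = (P xs / Q xs) ^ α * (push Q K u) ^ α :=
            Real.mul_rpow (le_of_lt hrpos) (hQU0 u)
    have hAB : alphaNorm α (push P K) ≤ (P xs / Q xs) * alphaNorm α (push Q K) := by
      unfold alphaNorm
      calc (∑ u, (push P K u) ^ α) ^ (1/α)
          ≤ ((P xs / Q xs) ^ α * ∑ u, (push Q K u) ^ α) ^ (1/α) :=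
            Real.rpow_le_rpow (le_of_lt hSA) hsum_le (by positivity)
        _ = ((P xs / Q xs) ^ α) ^ (1/α) * (∑ u, (push Q K u) ^ α) ^ (1/α) :=
            Real.mul_rpow (Real.rpow_nonneg (le_of_lt hrpos) α) (le_of_lt hSB)
        _ = (P xs / Q xs) * (∑ u, (push Q K u) ^ α) ^ (1/α) := by
            rw [← Real.rpow_mul (le_of_lt hrpos), mul_one_div_cancel hαne, Real.rpow_one]
    have hdivle : alphaNorm α (push P K) / alphaNorm α (push Q K) ≤ P xs / Q xs :=
      (div_le_iff₀ hBpos).2 hAB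
    exact Real.log_le_log (div_pos hApos hBpos) hdivle
  · -- least upper bound
    intro b hb
    have hQxs := hQpos xs
    have hmem : ∀ m : ℕ,
        Real.log ((P xs ^ α + (∑ y ∈ Finset.univ.erase xs, P y ^ α) * ((m:ℝ)+1) ^ (1-α)) ^ (1/α)
          / (Q xs ^ α + (∑ y ∈ Finset.univ.erase xs, Q y ^ α) * ((m:ℝ)+1) ^ (1-α)) ^ (1/α)) ≤ b := by
      intro m
      apply hb
      refine ⟨X × Fin (m+1), inferInstance, Kc m xs, Kc_channel m xs, ?_⟩
      unfold alphaNorm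
      rw [sum_rpow_Kc m xs P hP.1 hα0, sum_rpow_Kc m xs Q hQ.1 hα0]
    have ht : Filter.Tendsto (fun m : ℕ => ((m:ℝ)+1) ^ (1-α)) Filter.atTop (nhds 0) := by
      have h1 : Filter.Tendsto (fun x : ℝ => x ^ (-(α-1))) Filter.atTop (nhds 0) :=
        tendsto_rpow_neg_atTop (by linarith)
      have h2 : Filter.Tendsto (fun m : ℕ => (m:ℝ)+1) Filter.atTop Filter.atTop :=
        Filter.tendsto_atTop_add_const_right _ 1 tendsto_natCast_atTop_atTop
      have h3 := h1.comp h2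
      have h4 : (fun m : ℕ => ((m:ℝ)+1) ^ (1-α))
          = (fun x : ℝ => x ^ (-(α-1))) ∘ (fun m : ℕ => (m:ℝ)+1) := by
        funext m
        rw [Function.comp_apply]
        congr 1
        ring
      rw [h4]
      exact h3
    have hfP : Filter.Tendsto
        (fun m : ℕ => (P xs ^ α + (∑ y ∈ Finset.univ.erase xs, P y ^ α) * ((m:ℝ)+1) ^ (1-α)) ^ (1/α))
        Filter.atTop (nhds (P xs)) := by
      have h1 : Filter.Tendsto
          (fun m : ℕ => P xs ^ α + (∑ y ∈ Finset.univ.erase xs, P y ^ α) * ((m:ℝ)+1) ^ (1-α))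
          Filter.atTop (nhds (P xs ^ α + (∑ y ∈ Finset.univ.erase xs, P y ^ α) * 0)) :=
        tendsto_const_nhds.add (ht.const_mul _)
      rw [mul_zero, add_zero] at h1
      have h2 := h1.rpow_const (p := 1/α) (Or.inl (ne_of_gt (Real.rpow_pos_of_pos hPxs α)))
      have h3 : (P xs ^ α) ^ (1/α) = P xs := by
        rw [← Real.rpow_mul (le_of_lt hPxs), mul_one_div_cancel hαne, Real.rpow_one]
      rwa [h3] at h2
    have hfQ : Filter.Tendsto
        (fun m : ℕ => (Q xs ^ α + (∑ y ∈ Finset.univ.erase xs, Q y ^ α) * ((m:ℝ)+1) ^ (1-α)) ^ (1/α))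
        Filter.atTop (nhds (Q xs)) := by
      have h1 : Filter.Tendsto
          (fun m : ℕ => Q xs ^ α + (∑ y ∈ Finset.univ.erase xs, Q y ^ α) * ((m:ℝ)+1) ^ (1-α))
          Filter.atTop (nhds (Q xs ^ α + (∑ y ∈ Finset.univ.erase xs, Q y ^ α) * 0)) :=
        tendsto_const_nhds.add (ht.const_mul _)
      rw [mul_zero, add_zero] at h1
      have h2 := h1.rpow_const (p := 1/α) (Or.inl (ne_of_gt (Real.rpow_pos_of_pos hQxs α)))
      have h3 : (Q xs ^ α) ^ (1/α) = Q xs := by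
        rw [← Real.rpow_mul (le_of_lt hQxs), mul_one_div_cancel hαne, Real.rpow_one]
      rwa [h3] at h2
    have hdiv := hfP.div hfQ (ne_of_gt hQxs)
    have hlog := hdiv.log (ne_of_gt hrpos)
    exact le_of_tendsto hlog (Filter.Eventually.of_forall hmem)
end

section
/- Let P and Q be pmfs on a finite alphabet 𝒳 with Q(x)>0 for all x. Then D_∞(P‖Q) = sup over pmfs R on 𝒳 with R absolutely continuous with respect to P (i.e., R(x)>0 implies P(x)>0) of [ D(R‖Q) − D(R‖P) ], where D(·‖·) is the Kullback–Leibler divergence, and the supremum is attained at a point mass on any x* maximizing P(x)/Q(x). -/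
open Finset

/-- The Kullback–Leibler divergence `D(R‖S) = ∑_{x : R(x) > 0} R(x) log (R(x)/S(x))`. -/
noncomputable def KL {X : Type*} [Fintype X] (R S : X → ℝ) : ℝ :=
  ∑ x, if 0 < R x then R x * Real.log (R x / S x) else 0

lemma KL_delta {X : Type} [Fintype X] [DecidableEq X] (S : X → ℝ) (xs : X) :
    KL (fun x => if x = xs then 1 else 0) S = - Real.log (S xs) := by
  unfold KL
  rw [Finset.sum_eq_single xs]
  · simp [Real.log_div, Real.log_inv]
  · intro b _ hb
    simp [hb]
  · intro h
    exact absurd (Finset.mem_univ xs) h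

/-- `D_∞(P‖Q) = sup_{R ≪ P} (D(R‖Q) − D(R‖P))`, the supremum being attained
(hence `IsGreatest`), and in particular attained at the point mass on any `x*` maximizing
`P(x)/Q(x)`. -/
theorem stmt5 {X : Type} [Fintype X] [DecidableEq X]
    (P Q : X → ℝ) (hP : IsPMF P) (hQ : IsPMF Q) (hQpos : ∀ x, 0 < Q x) :
    IsGreatest
      {v : ℝ | ∃ R : X → ℝ, IsPMF R ∧ (∀ x, 0 < R x → 0 < P x) ∧
        v = KL R Q - KL R P}
      (Dinf P Q)
    ∧ ∀ xs : X, (∀ x, P x / Q x ≤ P xs / Q xs) →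
        KL (fun x => if x = xs then 1 else 0) Q -
          KL (fun x => if x = xs then 1 else 0) P = Dinf P Q := by
  obtain ⟨hPnn, hPsum⟩ := hP
  set A := {v : ℝ | ∃ x, 0 < P x ∧ v = Real.log (P x / Q x)} with hA
  have hfin : A.Finite := by
    have hsub : A ⊆ (fun x => Real.log (P x / Q x)) '' Set.univ := by
      rintro v ⟨x, hx, rfl⟩; exact ⟨x, trivial, rfl⟩
    exact (Set.finite_univ.image _).subset hsub
  have hne : A.Nonempty := by
    obtain ⟨x, _, hx⟩ := Finset.exists_ne_zero_of_sum_ne_zero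
      (by rw [hPsum]; norm_num : ∑ a, P a ≠ 0)
    exact ⟨_, x, lt_of_le_of_ne (hPnn x) (Ne.symm hx), rfl⟩
  have hbdd : BddAbove A := hfin.bddAbove
  -- value at a point mass
  have key : ∀ xs : X, 0 < P xs →
      KL (fun x => if x = xs then 1 else 0) Q -
        KL (fun x => if x = xs then 1 else 0) P = Real.log (P xs / Q xs) := by
    intro xs hxs
    rw [KL_delta, KL_delta, Real.log_div (ne_of_gt hxs) (ne_of_gt (hQpos xs))]
    ring
  -- upper bound
  have hub : ∀ v ∈ {v : ℝ | ∃ R : X → ℝ, IsPMF R ∧ (∀ x, 0 < R x → 0 < P x) ∧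
      v = KL R Q - KL R P}, v ≤ Dinf P Q := by
    rintro v ⟨R, ⟨hRnn, hRsum⟩, hac, rfl⟩
    have hrw : KL R Q - KL R P
        = ∑ x, if 0 < R x then R x * Real.log (P x / Q x) else 0 := by
      unfold KL
      rw [← Finset.sum_sub_distrib]
      refine Finset.sum_congr rfl fun x _ => ?_
      by_cases h : 0 < R x
      · simp only [if_pos h]
        rw [← mul_sub]
        congr 1
        rw [Real.log_div (ne_of_gt h) (ne_of_gt (hQpos x)),
          Real.log_div (ne_of_gt h) (ne_of_gt (hac x h)),
          Real.log_div (ne_of_gt (hac x h)) (ne_of_gt (hQpos x))]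
        ring
      · simp [h]
    rw [hrw]
    have step1 : ∑ x, (if 0 < R x then R x * Real.log (P x / Q x) else 0)
        ≤ ∑ x, (if 0 < R x then R x else 0) * Dinf P Q := by
      refine Finset.sum_le_sum fun x _ => ?_
      by_cases h : 0 < R x
      · simp only [if_pos h]
        exact mul_le_mul_of_nonneg_left (le_csSup hbdd ⟨x, hac x h, rfl⟩) (le_of_lt h)
      · simp [h]
    refine step1.trans ?_
    rw [← Finset.sum_mul]
    have : ∑ x, (if 0 < R x then R x else 0) = 1 := by
      rw [← hRsum]
      refine Finset.sum_congr rfl fun x _ => ?_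
      by_cases h : 0 < R x
      · simp [h]
      · simp [h, le_antisymm (not_lt.mp h) (hRnn x)]
    rw [this, one_mul]
  -- membership
  have hmem : Dinf P Q ∈ A := hne.csSup_mem hfin
  obtain ⟨xm, hxm, hxval⟩ := hmem
  constructor
  · constructor
    · refine ⟨fun x => if x = xm then 1 else 0, ⟨fun a => ?_, ?_⟩, fun x hx => ?_, ?_⟩
      · by_cases h : a = xm <;> simp [h]
      · simp
      · by_cases h : x = xm
        · rwa [h]
        · simp [h] at hx
      · rw [key xm hxm, hxval]
    · exact hub
  · intro xs hxs
    have hx0 : 0 < P xs := by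
      have h1 : 0 < P xs / Q xs :=
        lt_of_lt_of_le (div_pos hxm (hQpos xm)) (hxs xm)
      by_contra h
      have : P xs / Q xs ≤ 0 :=
        div_nonpos_of_nonpos_of_nonneg (not_lt.mp h) (le_of_lt (hQpos xs))
      linarith
    rw [key xs hx0]
    apply le_antisymm
    · exact le_csSup hbdd ⟨xs, hx0, rfl⟩
    · refine csSup_le hne ?_
      rintro v ⟨x, hx, rfl⟩
      have := Real.log_le_log (div_pos hx (hQpos x)) (hxs x)
      exact this
end
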